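/- arXiv:1907.12501 — 2 statements merged into one kernel-verified Lean document; each statement's English description precedes it below -/
import Mathlib

section
/- Let P be an extended logic program over Σ and q ∈ Σ. Then for every extended logic program R with Σ(R) ⊆ Σ∖{q}, AS(P ∪ R)‖{q} ⊆ AS(f_SP(P,q) ∪ R), i.e. every answer set of P ∪ R, with q removed, is an answer set of f_SP(P,q) ∪ R. -/
/- Core development: extended logic programs, HT-semantics, normal form,
   the syntactic forgetting operator f_SP, the semantic operator f_Sem,
   criterion Ω, q-forgettability, and distances between programs. -/

namespace ASPForget

variable {α : Type*} [DecidableEq α]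

/-- Body literals: an atom `a`, `not a`, or `not not a`. -/
inductive Lit (α : Type*) where
  | pos (a : α)
  | neg (a : α)
  | nneg (a : α)
  deriving DecidableEq

namespace Lit

/-- The atom of a body literal. -/
def atom : Lit α → α
  | pos a => a
  | neg a => a
  | nneg a => a

def isPos : Lit α → Bool
  | pos _ => true
  | _ => false

def isNeg : Lit α → Bool
  | neg _ => true
  | _ => false

def isNneg : Lit α → Bool
  | nneg _ => true
  | _ => false

/-- `not l`, with the simplification `not not not a = not a`. -/
def negate : Lit α → Lit α
  | pos a => neg a
  | neg a => nneg a
  | nneg a => neg a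

/-- `not not l`, with the simplifications. -/
def dneg : Lit α → Lit α
  | pos a => nneg a
  | neg a => neg a
  | nneg a => nneg a

end Lit

/-- A rule `H(r) ← B(r)` with a finite head (set of atoms) and
    a finite body (set of body literals). -/
structure Rule (α : Type*) where
  head : Finset α
  body : Finset (Lit α)
  deriving DecidableEq

namespace Rule

/-- `B⁺(r)`: the positive body atoms. -/
def bp (r : Rule α) : Finset α := (r.body.filter (fun l => l.isPos = true)).image Lit.atom

/-- `B⁻(r)`: the atoms under single negation in the body. -/
def bn (r : Rule α) : Finset α := (r.body.filter (fun l => l.isNeg = true)).image Lit.atom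

/-- `B⁻⁻(r)`: the atoms under double negation in the body. -/
def bnn (r : Rule α) : Finset α := (r.body.filter (fun l => l.isNneg = true)).image Lit.atom

end Rule

/-- Atoms occurring in a rule: `Σ(r)`. -/
def sigmaR (r : Rule α) : Finset α := r.head ∪ r.body.image Lit.atom

/-- Atoms occurring in a program: `Σ(P)`. -/
def sigmaSet (P : Set (Rule α)) : Set α := ⋃ r ∈ P, (sigmaR r : Set α)

/-- Satisfaction of a body literal by an interpretation. -/
def satLit (I : Finset α) : Lit α → Prop
  | .pos a => a ∈ I
  | .neg a => a ∉ I
  | .nneg a => a ∈ I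

/-- Classical satisfaction of a rule: if the body is satisfied then some head atom is true. -/
def ruleSat (I : Finset α) (r : Rule α) : Prop :=
  (∀ l ∈ r.body, satLit I l) → (r.head ∩ I).Nonempty

/-- Classical satisfaction of a program. -/
def clSat (I : Finset α) (P : Set (Rule α)) : Prop := ∀ r ∈ P, ruleSat I r

/-- The rule `H(r) ← B⁺(r)` (only the positive part of the body is kept). -/
def posPart (r : Rule α) : Rule α := ⟨r.head, r.body.filter (fun l => l.isPos = true)⟩

/-- The reduct `P^I`. -/
def reduct (P : Set (Rule α)) (I : Finset α) : Set (Rule α) :=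
  {s | ∃ r ∈ P, r.bn ∩ I = ∅ ∧ r.bnn ⊆ I ∧ s = posPart r}

/-- `⟨X,Y⟩ ⊨ P`: HT-satisfaction, i.e. `Y ⊨ P` and `X ⊨ P^Y`. -/
def htSat (P : Set (Rule α)) (X Y : Finset α) : Prop :=
  clSat Y P ∧ clSat X (reduct P Y)

/-- `HT(P)`: the HT-models of `P`, restricted to `Σ(P)`. -/
def HTset (P : Set (Rule α)) : Set (Finset α × Finset α) :=
  {p | p.1 ⊆ p.2 ∧ (↑p.2 : Set α) ⊆ sigmaSet P ∧ htSat P p.1 p.2}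

/-- `AS(P)`: the answer sets of `P`. -/
def AS (P : Set (Rule α)) : Set (Finset α) :=
  {Y | (Y, Y) ∈ HTset P ∧ ∀ X : Finset α, X ⊂ Y → (X, Y) ∉ HTset P}

/-- A tautological rule. -/
def Tautological (r : Rule α) : Prop :=
  (r.head ∩ r.bp).Nonempty ∨ (r.bp ∩ r.bn).Nonempty ∨ (r.bn ∩ r.bnn).Nonempty

/-- `r` is minimal in `P`. -/
def MinimalIn (P : Set (Rule α)) (r : Rule α) : Prop :=
  ¬ ∃ r' ∈ P, (r'.head ⊆ r.head ∧ r'.body ⊂ r.body) ∨ (r'.head ⊂ r.head ∧ r'.body ⊆ r.body)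

/-- `P` is in normal form. -/
def InNormalForm (P : Set (Rule α)) : Prop :=
  (∀ r ∈ P, ∀ a : α,
      ¬(Lit.pos a ∈ r.body ∧ Lit.neg a ∈ r.body) ∧
      ¬(Lit.pos a ∈ r.body ∧ Lit.nneg a ∈ r.body) ∧
      ¬(Lit.neg a ∈ r.body ∧ Lit.nneg a ∈ r.body)) ∧
  (∀ r ∈ P, ∀ a ∈ r.head, Lit.pos a ∉ r.body ∧ Lit.neg a ∉ r.body) ∧
  (∀ r ∈ P, MinimalIn P r)

/-- Steps (2) and (3) of the normal form construction applied to a single rule: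
    remove `a` from `B⁻⁻(r)` whenever `a ∈ B⁺(r)`, and remove `a` from `H(r)`
    whenever `a ∈ B⁻(r)`. -/
def nfRule (r : Rule α) : Rule α :=
  ⟨r.head \ r.bn, r.body.filter (fun l => ¬(l.isNneg = true ∧ l.atom ∈ r.bp))⟩

/-- `NF(P)`: remove tautological rules, simplify each remaining rule,
    and keep only the minimal rules of the result. -/
def NF (P : Set (Rule α)) : Set (Rule α) :=
  {r ∈ nfRule '' {r ∈ P | ¬ Tautological r} |
    MinimalIn (nfRule '' {r ∈ P | ¬ Tautological r}) r}

/-! The partition of a program according to the occurrences of an atom `q`. -/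

/-- `R`: rules not mentioning `q`. -/
def pR (Q : Set (Rule α)) (q : α) : Set (Rule α) := {r ∈ Q | q ∉ sigmaR r}
/-- `R0`: rules with `q` in the body. -/
def p0 (Q : Set (Rule α)) (q : α) : Set (Rule α) := {r ∈ Q | Lit.pos q ∈ r.body}
/-- `R1`: rules with `not q` in the body. -/
def p1 (Q : Set (Rule α)) (q : α) : Set (Rule α) := {r ∈ Q | Lit.neg q ∈ r.body}
/-- `R2`: rules with `not not q` in the body and `q` not in the head. -/
def p2 (Q : Set (Rule α)) (q : α) : Set (Rule α) :=
  {r ∈ Q | Lit.nneg q ∈ r.body ∧ q ∉ r.head}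
/-- `R3`: rules with `not not q` in the body and `q` in the head (self-cycles). -/
def p3 (Q : Set (Rule α)) (q : α) : Set (Rule α) :=
  {r ∈ Q | Lit.nneg q ∈ r.body ∧ q ∈ r.head}
/-- `R4`: rules with `q` in the head and no `not not q` in the body. -/
def p4 (Q : Set (Rule α)) (q : α) : Set (Rule α) :=
  {r ∈ Q | Lit.nneg q ∉ r.body ∧ q ∈ r.head}

/-- `H^q(r) = H(r)∖{q}`. -/
def Hq (q : α) (r : Rule α) : Finset α := r.head.erase q
/-- `B^q(r) = B(r)∖{q, not q, not not q}`. -/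
def Bq (q : α) (r : Rule α) : Finset (Lit α) := r.body.filter (fun l => l.atom ≠ q)

/-- `not(S)` for a set of body literals, with simplification. -/
def notL (S : Finset (Lit α)) : Finset (Lit α) := S.image Lit.negate
/-- `not not(S)` for a set of body literals, with simplification. -/
def dnegL (S : Finset (Lit α)) : Finset (Lit α) := S.image Lit.dneg
/-- `not(A)` for a set of atoms. -/
def notA (A : Finset α) : Finset (Lit α) := A.image Lit.neg
/-- `not not(A)` for a set of atoms. -/
def dnegA (A : Finset α) : Finset (Lit α) := A.image Lit.nneg

/-- The as-dual `Dual(q,Q)`: all sets obtained from a partition `⟨F,T⟩` of `Q` by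
    picking one literal of `B^q(r)` for each `r ∈ F` (negated) and one atom of
    `H^q(r)` for each `r ∈ T` (doubly negated). -/
def Dual (q : α) (Q : Set (Rule α)) : Set (Finset (Lit α)) :=
  { D | ∃ (F T : Set (Rule α)) (bf : Rule α → Lit α) (hf : Rule α → α),
      F ∪ T = Q ∧ Disjoint F T ∧
      (∀ r ∈ F, bf r ∈ Bq q r) ∧ (∀ r ∈ T, hf r ∈ Hq q r) ∧
      (↑D : Set (Lit α)) =
        (fun r => (bf r).negate) '' F ∪ (fun r => Lit.nneg (hf r)) '' T }

/-! The rules generated by the derivation rules (1a)–(7). -/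

def rule1a (q : α) (r0 r4 : Rule α) : Rule α :=
  ⟨r0.head ∪ Hq q r4, Bq q r0 ∪ r4.body⟩

def rule2a (q : α) (r0 r3 r' : Rule α) : Rule α :=
  ⟨r0.head ∪ Hq q r3, Bq q r0 ∪ Bq q r3 ∪ notA (Hq q r') ∪ dnegL (Bq q r')⟩

def rule3a (q : α) (r0 r3 : Rule α) (h : α) (D : Finset (Lit α)) : Rule α :=
  ⟨r0.head, Bq q r0 ∪ {Lit.nneg h} ∪ D ∪ Bq q r3 ∪ notA (Hq q r3)⟩

def rule1b (q : α) (r2 r4 : Rule α) : Rule α :=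
  ⟨r2.head, Bq q r2 ∪ notA (Hq q r4) ∪ dnegL r4.body⟩

def rule2b (q : α) (r2 r3 r' : Rule α) : Rule α :=
  ⟨r2.head, Bq q r2 ∪ notA (Hq q r3 ∪ Hq q r') ∪ dnegL (Bq q r3 ∪ Bq q r')⟩

def rule3b (q : α) (r2 r3 : Rule α) (h : α) (D : Finset (Lit α)) : Rule α :=
  ⟨r2.head, Bq q r2 ∪ notA (Hq q r3) ∪ dnegL (Bq q r3) ∪ {Lit.nneg h} ∪ D⟩

def rule4 (q : α) (r' : Rule α) (D : Finset (Lit α)) : Rule α :=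
  ⟨Hq q r', Bq q r' ∪ D⟩

def rule5 (q : α) (r' r3 r : Rule α) (D : Finset (Lit α)) : Rule α :=
  ⟨Hq q r', Bq q r' ∪ notA (r.head ∪ Hq q r3) ∪ dnegL (Bq q r ∪ Bq q r3) ∪ D⟩

def rule6 (q : α) (r' r3 : Rule α) (h : α) (D : Finset (Lit α)) : Rule α :=
  ⟨Hq q r', Bq q r' ∪ notA (Hq q r3) ∪ dnegL (Bq q r3) ∪ {Lit.nneg h} ∪ D⟩

def rule7 (q : α) (r0 r3 r3' : Rule α) (h : α) (D : Finset (Lit α)) : Rule α :=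
  ⟨r0.head ∪ Hq q r3,
    Bq q r0 ∪ Bq q r3 ∪ notA (Hq q r3') ∪ dnegL (Bq q r3') ∪ {Lit.nneg h} ∪ D⟩

/-! The sets of rules generated by each derivation rule, from `P' = NF(P)`. -/

def gen1a (P : Set (Rule α)) (q : α) : Set (Rule α) :=
  {s | ∃ r0 ∈ p0 (NF P) q, ∃ r4 ∈ p4 (NF P) q, s = rule1a q r0 r4}

def gen2a (P : Set (Rule α)) (q : α) : Set (Rule α) :=
  {s | ∃ r0 ∈ p0 (NF P) q, ∃ r3 ∈ p3 (NF P) q, ∃ r' ∈ p1 (NF P) q ∪ p4 (NF P) q,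
    s = rule2a q r0 r3 r'}

def gen3a (P : Set (Rule α)) (q : α) : Set (Rule α) :=
  {s | ∃ r0 ∈ p0 (NF P) q, ∃ r3 ∈ p3 (NF P) q, ∃ h ∈ r0.head,
    ∃ D ∈ Dual q ((p0 (NF P) q ∪ p2 (NF P) q) \ {r0}), s = rule3a q r0 r3 h D}

def gen1b (P : Set (Rule α)) (q : α) : Set (Rule α) :=
  {s | ∃ r2 ∈ p2 (NF P) q, ∃ r4 ∈ p4 (NF P) q, s = rule1b q r2 r4}

def gen2b (P : Set (Rule α)) (q : α) : Set (Rule α) :=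
  {s | ∃ r2 ∈ p2 (NF P) q, ∃ r3 ∈ p3 (NF P) q, ∃ r' ∈ p1 (NF P) q ∪ p4 (NF P) q,
    s = rule2b q r2 r3 r'}

def gen3b (P : Set (Rule α)) (q : α) : Set (Rule α) :=
  {s | ∃ r2 ∈ p2 (NF P) q, ∃ r3 ∈ p3 (NF P) q, ∃ h ∈ r2.head,
    ∃ D ∈ Dual q ((p0 (NF P) q ∪ p2 (NF P) q) \ {r2}), s = rule3b q r2 r3 h D}

def gen4 (P : Set (Rule α)) (q : α) : Set (Rule α) :=
  {s | ∃ r' ∈ p1 (NF P) q ∪ p4 (NF P) q, ∃ D ∈ Dual q (p3 (NF P) q ∪ p4 (NF P) q),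
    D ∩ notL (Bq q r') = ∅ ∧ s = rule4 q r' D}

def gen5 (P : Set (Rule α)) (q : α) : Set (Rule α) :=
  {s | ∃ r' ∈ p1 (NF P) q ∪ p4 (NF P) q, ∃ r3 ∈ p3 (NF P) q,
    ∃ r ∈ p0 (NF P) q ∪ p2 (NF P) q, ∃ D ∈ Dual q (p4 (NF P) q),
    D ∩ notL (Bq q r') = ∅ ∧ s = rule5 q r' r3 r D}

def gen6 (P : Set (Rule α)) (q : α) : Set (Rule α) :=
  {s | ∃ r' ∈ p1 (NF P) q ∪ p4 (NF P) q, ∃ r3 ∈ p3 (NF P) q, ∃ h ∈ r'.head,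
    ∃ D ∈ Dual q ((p1 (NF P) q ∪ p4 (NF P) q) \ {r'}), s = rule6 q r' r3 h D}

def gen7 (P : Set (Rule α)) (q : α) : Set (Rule α) :=
  {s | ∃ r0 ∈ p0 (NF P) q, ∃ r3 ∈ p3 (NF P) q, ∃ r3' ∈ p3 (NF P) q, r3 ≠ r3' ∧
    ∃ D ∈ Dual q ((p0 (NF P) q ∪ p2 (NF P) q) \ {r0}), ∃ h ∈ r0.head,
    s = rule7 q r0 r3 r3' h D}

/-- The program `P''` of Definition 3. -/
def fSPpre (P : Set (Rule α)) (q : α) : Set (Rule α) :=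
  pR (NF P) q ∪ gen1a P q ∪ gen2a P q ∪ gen3a P q ∪ gen1b P q ∪ gen2b P q ∪
    gen3b P q ∪ gen4 P q ∪ gen5 P q ∪ gen6 P q ∪ gen7 P q

/-- The syntactic forgetting operator `f_SP(P,q) = NF(P'')`. -/
def fSP (P : Set (Rule α)) (q : α) : Set (Rule α) := NF (fSPpre P q)

/-! The semantic characterisation `F_SP` and criterion `Ω`. -/

/-- `R^{Y,A}_{⟨P,V⟩}`. -/
def RYA (P : Set (Rule α)) (V Y A : Finset α) : Set (Finset α) :=
  {Z | ∃ X : Finset α, (X, Y ∪ A) ∈ HTset P ∧ Z = X \ V}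

/-- `Rel^Y_{⟨P,V⟩}`. -/
def RelY (P : Set (Rule α)) (V Y : Finset α) : Set (Finset α) :=
  {A | A ⊆ V ∧ (Y ∪ A, Y ∪ A) ∈ HTset P ∧
    ¬ ∃ A' : Finset α, A' ⊂ A ∧ (Y ∪ A', Y ∪ A) ∈ HTset P}

/-- `𝓡^Y_{⟨P,V⟩}`. -/
def Rfam (P : Set (Rule α)) (V Y : Finset α) : Set (Set (Finset α)) :=
  {S | ∃ A ∈ RelY P V Y, S = RYA P V Y A}

/-- The target set of HT-models of the class `F_SP`. -/
def Msp (P : Set (Rule α)) (V : Finset α) : Set (Finset α × Finset α) :=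
  {p | p.1 ⊆ p.2 ∧ (↑p.2 : Set α) ⊆ sigmaSet P \ (↑V : Set α) ∧ p.1 ∈ ⋂₀ Rfam P V p.2}

/-- The instance `⟨P,V⟩` satisfies criterion `Ω`: for some `Y ⊆ Σ∖V`, the family
    `𝓡^Y` is non-empty and has no least element. -/
def OmegaSat (Sg : Finset α) (P : Set (Rule α)) (V : Finset α) : Prop :=
  ∃ Y : Finset α, Y ⊆ Sg \ V ∧ (Rfam P V Y).Nonempty ∧
    ¬ ∃ S ∈ Rfam P V Y, ∀ S' ∈ Rfam P V Y, S ⊆ S'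

/-! q-forgettable programs. -/

/-- A self-cycle on `q`: a rule with `q ∈ H(r)` and `q ∈ B⁻⁻(r)`. -/
def SelfCycle (q : α) (r : Rule α) : Prop := q ∈ r.head ∧ Lit.nneg q ∈ r.body

/-- `P` is q-forgettable. -/
def QForgettable (q : α) (P : Set (Rule α)) : Prop :=
  (∀ r ∈ P, q ∈ sigmaR r → SelfCycle q r) ∨
  ((⟨{q}, ∅⟩ : Rule α) ∈ P) ∨
  (∀ r ∈ P, ¬ SelfCycle q r)

/-! The semantic (counter-model based) operator `f_Sem`, relative to `Σ' = Σ(P)∖{q}`. -/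

/-- The counter-model rule `r⟨X,Y⟩` for `X ⊂ Y`. -/
def ruleXY (Sg' X Y : Finset α) : Rule α :=
  ⟨Y \ X, X.image Lit.pos ∪ (Sg' \ Y).image Lit.neg ∪ (Y \ X).image Lit.nneg⟩

/-- The counter-model rule `r⟨Y,Y⟩`. -/
def ruleYY (Sg' Y : Finset α) : Rule α :=
  ⟨∅, Y.image Lit.pos ∪ (Sg' \ Y).image Lit.neg⟩

/-- The semantic forgetting operator `f_Sem(P,q)` over signature `Σ'`. -/
def fSem (P : Set (Rule α)) (q : α) (Sg' : Finset α) : Set (Rule α) :=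
  {s | ∃ X Y : Finset α, X ⊂ Y ∧ Y ⊆ Sg' ∧ (X, Y) ∉ Msp P {q} ∧
        (Y, Y) ∈ Msp P {q} ∧ s = ruleXY Sg' X Y} ∪
  {s | ∃ Y : Finset α, Y ⊆ Sg' ∧ (Y, Y) ∉ Msp P {q} ∧ s = ruleYY Sg' Y}

/-! Distances between rules and programs. -/

/-- The size `|r| = |H(r)| + |B(r)|` of a rule. -/
def ruleSize (r : Rule α) : ℕ := r.head.card + r.body.card

/-- The distance `d(r,r')` between two rules. -/
def ruleDist (r r' : Rule α) : ℕ :=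
  ((r.head \ r'.head) ∪ (r'.head \ r.head)).card +
  ((r.body \ r'.body) ∪ (r'.body \ r.body)).card

/-- The distance induced by a mapping with domain `dom ⊆ P₁` given by `f`. -/
noncomputable def distM (P₁ P₂ dom : Set (Rule α)) (f : Rule α → Rule α) : ℕ :=
  (∑ᶠ r ∈ dom, ruleDist r (f r)) + (∑ᶠ r ∈ P₁ \ dom, ruleSize r) +
    (∑ᶠ r ∈ P₂ \ (f '' dom), ruleSize r)

/-- The distance between two programs: the minimum over all partial injective
    mappings from `P₁` to `P₂`. -/
noncomputable def progDist (P₁ P₂ : Set (Rule α)) : ℕ :=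
  sInf {n | ∃ (dom : Set (Rule α)) (f : Rule α → Rule α),
    dom ⊆ P₁ ∧ Set.InjOn f dom ∧ f '' dom ⊆ P₂ ∧ n = distM P₁ P₂ dom f}


/-! ### Infrastructure lemmas -/

section Infra
variable {α : Type*} [DecidableEq α]
set_option linter.unusedSectionVars false

lemma mem_bp {r : Rule α} {a : α} : a ∈ r.bp ↔ Lit.pos a ∈ r.body := by
  unfold Rule.bp
  simp only [Finset.mem_image, Finset.mem_filter]
  constructor
  · rintro ⟨l, ⟨hl, hp⟩, rfl⟩
    cases l <;> simp_all [Lit.isPos, Lit.atom]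
  · intro h; exact ⟨Lit.pos a, ⟨h, rfl⟩, rfl⟩

lemma mem_bn {r : Rule α} {a : α} : a ∈ r.bn ↔ Lit.neg a ∈ r.body := by
  unfold Rule.bn
  simp only [Finset.mem_image, Finset.mem_filter]
  constructor
  · rintro ⟨l, ⟨hl, hp⟩, rfl⟩
    cases l <;> simp_all [Lit.isNeg, Lit.atom]
  · intro h; exact ⟨Lit.neg a, ⟨h, rfl⟩, rfl⟩

lemma mem_bnn {r : Rule α} {a : α} : a ∈ r.bnn ↔ Lit.nneg a ∈ r.body := by
  unfold Rule.bnn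
  simp only [Finset.mem_image, Finset.mem_filter]
  constructor
  · rintro ⟨l, ⟨hl, hp⟩, rfl⟩
    cases l <;> simp_all [Lit.isNneg, Lit.atom]
  · intro h; exact ⟨Lit.nneg a, ⟨h, rfl⟩, rfl⟩

/-- HT-satisfaction of a single body literal. -/
def htLit (X Y : Finset α) : Lit α → Prop
  | .pos a => a ∈ X
  | .neg a => a ∉ Y
  | .nneg a => a ∈ Y

lemma clSat_iff {I : Finset α} {Q : Set (Rule α)} :
    clSat I Q ↔ ∀ r ∈ Q, (∀ l ∈ r.body, satLit I l) → (r.head ∩ I).Nonempty := Iff.rfl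

lemma reduct_sat_iff {X Y : Finset α} {Q : Set (Rule α)} :
    clSat X (reduct Q Y) ↔
      ∀ r ∈ Q, (∀ l ∈ r.body, htLit X Y l) → (r.head ∩ X).Nonempty := by
  constructor
  · intro h r hr hb
    have hbn : r.bn ∩ Y = ∅ := by
      rw [Finset.eq_empty_iff_forall_notMem]
      intro a ha
      rw [Finset.mem_inter, mem_bn] at ha
      exact (hb _ ha.1) ha.2
    have hbnn : r.bnn ⊆ Y := by
      intro a ha
      rw [mem_bnn] at ha
      exact hb _ ha
    have := h (posPart r) ⟨r, hr, hbn, hbnn, rfl⟩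
    apply this
    intro l hl
    rw [posPart] at hl
    simp only [Finset.mem_filter] at hl
    obtain ⟨hl1, hl2⟩ := hl
    cases l with
    | pos a => exact hb _ hl1
    | neg a => simp [Lit.isPos] at hl2
    | nneg a => simp [Lit.isPos] at hl2
  · rintro h s ⟨r, hr, hbn, hbnn, rfl⟩ hb
    apply h r hr
    intro l hl
    cases l with
    | pos a =>
      show a ∈ X
      have : satLit X (Lit.pos a) := by
        apply hb
        rw [posPart]
        simp only [Finset.mem_filter]
        exact ⟨hl, rfl⟩
      exact this
    | neg a =>
      intro haY
      have : a ∈ r.bn ∩ Y := by rw [Finset.mem_inter, mem_bn]; exact ⟨hl, haY⟩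
      rw [hbn] at this; exact absurd this (Finset.notMem_empty a)
    | nneg a => exact hbnn (mem_bnn.2 hl)

lemma htSat_iff {X Y : Finset α} {Q : Set (Rule α)} :
    htSat Q X Y ↔ (∀ r ∈ Q, (∀ l ∈ r.body, satLit Y l) → (r.head ∩ Y).Nonempty) ∧
      (∀ r ∈ Q, (∀ l ∈ r.body, htLit X Y l) → (r.head ∩ X).Nonempty) := by
  rw [htSat, clSat_iff, reduct_sat_iff]

lemma htSat_union {X Y : Finset α} {P Q : Set (Rule α)} :
    htSat (P ∪ Q) X Y ↔ htSat P X Y ∧ htSat Q X Y := by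
  simp only [htSat_iff, Set.mem_union]
  constructor
  · intro h
    exact ⟨⟨fun r hr => h.1 r (Or.inl hr), fun r hr => h.2 r (Or.inl hr)⟩,
      ⟨fun r hr => h.1 r (Or.inr hr), fun r hr => h.2 r (Or.inr hr)⟩⟩
  · rintro ⟨h1, h2⟩
    refine ⟨fun r hr => ?_, fun r hr => ?_⟩
    · rcases hr with hr | hr
      · exact h1.1 r hr
      · exact h2.1 r hr
    · rcases hr with hr | hr
      · exact h1.2 r hr
      · exact h2.2 r hr

lemma htLit_self {I : Finset α} {l : Lit α} : htLit I I l ↔ satLit I l := by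
  cases l <;> rfl

lemma htSat_self {I : Finset α} {Q : Set (Rule α)} : htSat Q I I ↔ clSat I Q := by
  rw [htSat_iff, clSat_iff]
  constructor
  · exact fun h => h.1
  · intro h
    refine ⟨h, fun r hr hb => h r hr fun l hl => htLit_self.1 (hb l hl)⟩

lemma satLit_negate {I : Finset α} {l : Lit α} : satLit I l.negate ↔ ¬ satLit I l := by
  cases l <;> simp [Lit.negate, satLit]

lemma satLit_dneg {I : Finset α} {l : Lit α} : satLit I l.dneg ↔ satLit I l := by
  cases l <;> simp [Lit.dneg, satLit]

lemma htLit_negate {X Y : Finset α} {l : Lit α} :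
    htLit X Y l.negate ↔ ¬ satLit Y l := by
  cases l <;> simp [Lit.negate, satLit, htLit]

lemma htLit_dneg {X Y : Finset α} {l : Lit α} :
    htLit X Y l.dneg ↔ satLit Y l := by
  cases l <;> simp [Lit.dneg, satLit, htLit]

lemma htLit_to_sat {X Y : Finset α} {l : Lit α} (hX : X ⊆ Y) (h : htLit X Y l) :
    satLit Y l := by
  cases l with
  | pos a => exact hX h
  | neg a => exact h
  | nneg a => exact h

/-- transfer of classical satisfaction between `Y` and `Y \ {q}` for q-free literals -/
lemma satLit_transfer {Y : Finset α} {q : α} {l : Lit α} (hq : l.atom ≠ q) :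
    satLit (Y \ {q}) l ↔ satLit Y l := by
  cases l <;>
    simp_all [satLit, Lit.atom, Finset.mem_sdiff, Finset.mem_singleton]

lemma htLit_transfer {X Y : Finset α} {q : α} {l : Lit α} (hq : l.atom ≠ q) :
    htLit X (Y \ {q}) l ↔ htLit X Y l := by
  cases l <;>
    simp_all [htLit, Lit.atom, Finset.mem_sdiff, Finset.mem_singleton]

lemma mem_Bq {q : α} {r : Rule α} {l : Lit α} :
    l ∈ Bq q r ↔ l ∈ r.body ∧ l.atom ≠ q := by
  simp [Bq]

lemma mem_Hq {q : α} {r : Rule α} {a : α} :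
    a ∈ Hq q r ↔ a ∈ r.head ∧ a ≠ q := by
  simp [Hq, Finset.mem_erase, and_comm]

lemma atom_eq_cases {l : Lit α} {q : α} (h : l.atom = q) :
    l = Lit.pos q ∨ l = Lit.neg q ∨ l = Lit.nneg q := by
  cases l <;> simp_all [Lit.atom]

end Infra
/-! ### Normal form lemmas -/

section NFLem
variable {α : Type*} [DecidableEq α]
set_option linter.unusedSectionVars false

/-- Every rule in a set has a minimal dominator. -/
lemma exists_min_dominator (S : Set (Rule α)) :
    ∀ n (r : Rule α), ruleSize r ≤ n → r ∈ S →
      ∃ r' ∈ S, MinimalIn S r' ∧ r'.head ⊆ r.head ∧ r'.body ⊆ r.body := by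
  intro n
  induction n with
  | zero =>
    intro r hn hr
    have hh0 : r.head = ∅ := by
      rw [← Finset.card_eq_zero]; simp only [ruleSize] at hn; omega
    have hb0 : r.body = ∅ := by
      rw [← Finset.card_eq_zero]; simp only [ruleSize] at hn; omega
    refine ⟨r, hr, ?_, subset_rfl, subset_rfl⟩
    rintro ⟨r2, hr2, ⟨_, hb⟩ | ⟨hh, _⟩⟩
    · rw [hb0] at hb; exact Finset.not_ssubset_empty _ hb
    · rw [hh0] at hh; exact Finset.not_ssubset_empty _ hh
  | succ n ih =>
    intro r hn hr
    by_cases hm : MinimalIn S r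
    · exact ⟨r, hr, hm, subset_rfl, subset_rfl⟩
    · rw [MinimalIn, not_not] at hm
      obtain ⟨r2, hr2, h⟩ := hm
      have hsize : ruleSize r2 ≤ n := by
        rcases h with ⟨hh, hb⟩ | ⟨hh, hb⟩
        · have h1 := Finset.card_le_card hh
          have h2 := Finset.card_lt_card hb
          simp only [ruleSize] at hn ⊢; omega
        · have h1 := Finset.card_lt_card hh
          have h2 := Finset.card_le_card hb
          simp only [ruleSize] at hn ⊢; omega
      obtain ⟨r', hr', hmin, hh', hb'⟩ := ih r2 hsize hr2
      refine ⟨r', hr', hmin, ?_, ?_⟩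
      · rcases h with ⟨hh, _⟩ | ⟨hh, _⟩
        · exact hh'.trans hh
        · exact hh'.trans hh.subset
      · rcases h with ⟨_, hb⟩ | ⟨_, hb⟩
        · exact hb'.trans hb.subset
        · exact hb'.trans hb

lemma nfRule_head {r : Rule α} : (nfRule r).head = r.head \ r.bn := rfl

lemma mem_nfRule_body {r : Rule α} {l : Lit α} :
    l ∈ (nfRule r).body ↔ l ∈ r.body ∧ ¬(l.isNneg = true ∧ l.atom ∈ r.bp) := by
  simp [nfRule]

/-- HT satisfaction of a rule, bundled. -/
def htRuleSat (X Y : Finset α) (r : Rule α) : Prop :=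
  ((∀ l ∈ r.body, satLit Y l) → (r.head ∩ Y).Nonempty) ∧
  ((∀ l ∈ r.body, htLit X Y l) → (r.head ∩ X).Nonempty)

lemma htSat_iff' {X Y : Finset α} {Q : Set (Rule α)} :
    htSat Q X Y ↔ ∀ r ∈ Q, htRuleSat X Y r := by
  rw [htSat_iff]
  constructor
  · intro h r hr; exact ⟨h.1 r hr, h.2 r hr⟩
  · intro h; exact ⟨fun r hr => (h r hr).1, fun r hr => (h r hr).2⟩

lemma htRuleSat_of_subset {X Y : Finset α} {r r' : Rule α} (hX : X ⊆ Y)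
    (hh : r'.head ⊆ r.head) (hb : r'.body ⊆ r.body) (h : htRuleSat X Y r') :
    htRuleSat X Y r := by
  constructor
  · intro hbody
    obtain ⟨a, ha⟩ := h.1 fun l hl => hbody l (hb hl)
    rw [Finset.mem_inter] at ha
    exact ⟨a, Finset.mem_inter.2 ⟨hh ha.1, ha.2⟩⟩
  · intro hbody
    obtain ⟨a, ha⟩ := h.2 fun l hl => hbody l (hb hl)
    rw [Finset.mem_inter] at ha
    exact ⟨a, Finset.mem_inter.2 ⟨hh ha.1, ha.2⟩⟩

lemma htRuleSat_taut {X Y : Finset α} {r : Rule α} (hX : X ⊆ Y)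
    (ht : Tautological r) : htRuleSat X Y r := by
  rcases ht with ⟨a, ha⟩ | ⟨a, ha⟩ | ⟨a, ha⟩ <;> rw [Finset.mem_inter] at ha
  · -- a ∈ head ∩ bp
    have hp := mem_bp.1 ha.2
    constructor
    · intro hbody
      exact ⟨a, Finset.mem_inter.2 ⟨ha.1, hbody _ hp⟩⟩
    · intro hbody
      exact ⟨a, Finset.mem_inter.2 ⟨ha.1, hbody _ hp⟩⟩
  · -- a ∈ bp ∩ bn
    have hp := mem_bp.1 ha.1
    have hn := mem_bn.1 ha.2
    constructor
    · intro hbody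
      exact absurd (hbody _ hp) (hbody _ hn)
    · intro hbody
      exact absurd (hX (hbody _ hp)) (hbody _ hn)
  · -- a ∈ bn ∩ bnn
    have hn := mem_bn.1 ha.1
    have hnn := mem_bnn.1 ha.2
    constructor
    · intro hbody
      exact absurd (hbody _ hnn) (hbody _ hn)
    · intro hbody
      exact absurd ((hbody _ hnn : htLit X Y (Lit.nneg a)) : a ∈ Y) (hbody _ hn)

lemma htRuleSat_nfRule_iff {X Y : Finset α} {r : Rule α} (hX : X ⊆ Y) :
    htRuleSat X Y (nfRule r) ↔ htRuleSat X Y r := by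
  constructor
  · intro h
    constructor
    · intro hbody
      have h1 : (nfRule r).head ∩ Y |>.Nonempty := by
        apply h.1
        intro l hl
        exact hbody l (mem_nfRule_body.1 hl).1
      obtain ⟨a, ha⟩ := h1
      rw [Finset.mem_inter, nfRule_head, Finset.mem_sdiff] at ha
      exact ⟨a, Finset.mem_inter.2 ⟨ha.1.1, ha.2⟩⟩
    · intro hbody
      have h1 : (nfRule r).head ∩ X |>.Nonempty := by
        apply h.2
        intro l hl
        exact hbody l (mem_nfRule_body.1 hl).1
      obtain ⟨a, ha⟩ := h1
      rw [Finset.mem_inter, nfRule_head, Finset.mem_sdiff] at ha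
      exact ⟨a, Finset.mem_inter.2 ⟨ha.1.1, ha.2⟩⟩
  · intro h
    constructor
    · intro hbody
      by_cases hbn : ∃ a ∈ r.bn, a ∈ Y
      · obtain ⟨a, ha, haY⟩ := hbn
        exact absurd haY (hbody _ (mem_nfRule_body.2 ⟨mem_bn.1 ha, by simp [Lit.isNneg]⟩))
      · push_neg at hbn
        have hY : (r.head ∩ Y).Nonempty := by
          apply h.1
          intro l hl
          by_cases hc : l.isNneg = true ∧ l.atom ∈ r.bp
          · -- l = nneg a with pos a in body
            cases l with
            | pos a => simp [Lit.isNneg] at hc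
            | neg a => simp [Lit.isNneg] at hc
            | nneg a =>
              have : satLit Y (Lit.pos a) :=
                hbody _ (mem_nfRule_body.2 ⟨mem_bp.1 hc.2, by simp [Lit.isNneg, Lit.atom]⟩)
              exact this
          · exact hbody l (mem_nfRule_body.2 ⟨hl, hc⟩)
        obtain ⟨a, ha⟩ := hY
        rw [Finset.mem_inter] at ha
        refine ⟨a, Finset.mem_inter.2 ⟨?_, ha.2⟩⟩
        rw [nfRule_head, Finset.mem_sdiff]
        exact ⟨ha.1, fun hbn' => hbn a hbn' ha.2⟩
    · intro hbody
      by_cases hbn : ∃ a ∈ r.bn, a ∈ Y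
      · obtain ⟨a, ha, haY⟩ := hbn
        exact absurd haY (hbody _ (mem_nfRule_body.2 ⟨mem_bn.1 ha, by simp [Lit.isNneg]⟩))
      · push_neg at hbn
        have hY : (r.head ∩ X).Nonempty := by
          apply h.2
          intro l hl
          by_cases hc : l.isNneg = true ∧ l.atom ∈ r.bp
          · cases l with
            | pos a => simp [Lit.isNneg] at hc
            | neg a => simp [Lit.isNneg] at hc
            | nneg a =>
              have : htLit X Y (Lit.pos a) :=
                hbody _ (mem_nfRule_body.2 ⟨mem_bp.1 hc.2, by simp [Lit.isNneg, Lit.atom]⟩)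
              exact hX this
          · exact hbody l (mem_nfRule_body.2 ⟨hl, hc⟩)
        obtain ⟨a, ha⟩ := hY
        rw [Finset.mem_inter] at ha
        refine ⟨a, Finset.mem_inter.2 ⟨?_, ha.2⟩⟩
        rw [nfRule_head, Finset.mem_sdiff]
        exact ⟨ha.1, fun hbn' => hbn a hbn' (hX ha.2)⟩

/-- NF preserves HT-satisfaction. -/
lemma htSat_NF {X Y : Finset α} {Q : Set (Rule α)} (hX : X ⊆ Y) :
    htSat (NF Q) X Y ↔ htSat Q X Y := by
  rw [htSat_iff', htSat_iff']
  constructor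
  · intro h r hr
    by_cases ht : Tautological r
    · exact htRuleSat_taut hX ht
    · rw [← htRuleSat_nfRule_iff hX]
      set S : Set (Rule α) := nfRule '' {r ∈ Q | ¬ Tautological r} with hS
      have hmem : nfRule r ∈ S := ⟨r, ⟨hr, ht⟩, rfl⟩
      obtain ⟨r', hr', hmin, hh, hb⟩ :=
        exists_min_dominator S (ruleSize (nfRule r)) (nfRule r) le_rfl hmem
      have : r' ∈ NF Q := ⟨hr', hmin⟩
      exact htRuleSat_of_subset hX hh hb (h r' this)
  · intro h r hr
    obtain ⟨⟨r0, ⟨hr0, ht0⟩, rfl⟩, _⟩ := hr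
    rw [htRuleSat_nfRule_iff hX]
    exact h r0 hr0

/-- Member facts of NF programs. -/
lemma NF_mem {Q : Set (Rule α)} {s : Rule α} (hs : s ∈ NF Q) :
    ∃ r ∈ Q, ¬ Tautological r ∧ s = nfRule r := by
  obtain ⟨⟨r, ⟨hr, ht⟩, rfl⟩, _⟩ := hs
  exact ⟨r, hr, ht, rfl⟩

lemma nf_fact_pos {Q : Set (Rule α)} {s : Rule α} (hs : s ∈ NF Q) {a : α}
    (h : Lit.pos a ∈ s.body) : a ∉ s.head ∧ Lit.neg a ∉ s.body ∧ Lit.nneg a ∉ s.body := by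
  obtain ⟨r, hr, ht, rfl⟩ := NF_mem hs
  rw [Tautological] at ht
  push_neg at ht
  obtain ⟨ht1, ht2, ht3⟩ := ht
  have hp : a ∈ r.bp := mem_bp.2 (mem_nfRule_body.1 h).1
  refine ⟨?_, ?_, ?_⟩
  · intro hh
    rw [nfRule_head, Finset.mem_sdiff] at hh
    exact Finset.nonempty_iff_ne_empty.1 ⟨a, Finset.mem_inter.2 ⟨hh.1, hp⟩⟩ ht1
  · intro hn
    have : a ∈ r.bn := mem_bn.2 (mem_nfRule_body.1 hn).1
    exact Finset.nonempty_iff_ne_empty.1 ⟨a, Finset.mem_inter.2 ⟨hp, this⟩⟩ ht2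
  · intro hnn
    exact (mem_nfRule_body.1 hnn).2 ⟨rfl, hp⟩

lemma nf_fact_neg {Q : Set (Rule α)} {s : Rule α} (hs : s ∈ NF Q) {a : α}
    (h : Lit.neg a ∈ s.body) : a ∉ s.head ∧ Lit.pos a ∉ s.body ∧ Lit.nneg a ∉ s.body := by
  obtain ⟨r, hr, ht, rfl⟩ := NF_mem hs
  rw [Tautological] at ht
  push_neg at ht
  obtain ⟨ht1, ht2, ht3⟩ := ht
  have hn : a ∈ r.bn := mem_bn.2 (mem_nfRule_body.1 h).1
  refine ⟨?_, ?_, ?_⟩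
  · intro hh
    rw [nfRule_head, Finset.mem_sdiff] at hh
    exact hh.2 hn
  · intro hp
    have : a ∈ r.bp := mem_bp.2 (mem_nfRule_body.1 hp).1
    exact Finset.nonempty_iff_ne_empty.1 ⟨a, Finset.mem_inter.2 ⟨this, hn⟩⟩ ht2
  · intro hnn
    have : a ∈ r.bnn := mem_bnn.2 (mem_nfRule_body.1 hnn).1
    exact Finset.nonempty_iff_ne_empty.1 ⟨a, Finset.mem_inter.2 ⟨hn, this⟩⟩ ht3

lemma nf_fact_nneg {Q : Set (Rule α)} {s : Rule α} (hs : s ∈ NF Q) {a : α}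
    (h : Lit.nneg a ∈ s.body) : Lit.pos a ∉ s.body ∧ Lit.neg a ∉ s.body := by
  refine ⟨?_, ?_⟩
  · intro hp; exact (nf_fact_pos hs hp).2.2 h
  · intro hn; exact (nf_fact_neg hs hn).2.2 h

lemma nf_fact_head {Q : Set (Rule α)} {s : Rule α} (hs : s ∈ NF Q) {a : α}
    (h : a ∈ s.head) : Lit.pos a ∉ s.body ∧ Lit.neg a ∉ s.body := by
  refine ⟨?_, ?_⟩
  · intro hp; exact (nf_fact_pos hs hp).1 h
  · intro hn; exact (nf_fact_neg hs hn).1 h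

lemma NF_finite {Q : Set (Rule α)} (hQ : Q.Finite) : (NF Q).Finite := by
  apply Set.Finite.subset (hQ.subset (Set.sep_subset _ _) |>.image nfRule)
  exact Set.sep_subset _ _

end NFLem
/-! ### Dual machinery -/

section DualLem
variable {α : Type*} [DecidableEq α]
set_option linter.unusedSectionVars false

/-- A rule is selectable for the dual construction. -/
def Sel (Y' : Finset α) (q : α) (u : Rule α) : Prop :=
  (∃ l ∈ Bq q u, ¬ satLit Y' l) ∨ ∃ h ∈ Hq q u, h ∈ Y'

/-- Build a dual set all of whose elements are satisfied. -/
lemma dual_build {q : α} {Y' : Finset α} {Q : Set (Rule α)} (hfin : Q.Finite)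
    (sel : ∀ u ∈ Q, Sel Y' q u) :
    ∃ D : Finset (Lit α), D ∈ Dual q Q ∧ ∀ d ∈ D, satLit Y' d := by
  classical
  set F : Set (Rule α) := {u ∈ Q | ∃ l, l ∈ Bq q u ∧ ¬ satLit Y' l} with hF
  set T : Set (Rule α) := Q \ F with hT
  set bf : Rule α → Lit α := fun u =>
    if h : ∃ l, l ∈ Bq q u ∧ ¬ satLit Y' l then h.choose else Lit.pos q with hbf
  set hfn : Rule α → α := fun u =>
    if h : ∃ a, a ∈ Hq q u ∧ a ∈ Y' then h.choose else q with hhf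
  have hFQ : F ⊆ Q := Set.sep_subset _ _
  have hDfin : ((fun r => (bf r).negate) '' F ∪ (fun r => Lit.nneg (hfn r)) '' T).Finite :=
    Set.Finite.union ((hfin.subset hFQ).image _) ((hfin.subset (Set.diff_subset)).image _)
  refine ⟨hDfin.toFinset, ⟨F, T, bf, hfn, ?_, ?_, ?_, ?_, ?_⟩, ?_⟩
  · exact Set.union_diff_cancel hFQ
  · exact Set.disjoint_sdiff_right
  · intro u hu
    obtain ⟨huQ, hex⟩ := hu
    rw [hbf]
    simp only [dif_pos hex]
    exact hex.choose_spec.1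
  · intro u hu
    obtain ⟨huQ, hnex⟩ := hu
    have hsel := sel u huQ
    have hex : ∃ a, a ∈ Hq q u ∧ a ∈ Y' := by
      rcases hsel with ⟨l, hl, hns⟩ | ⟨h, hh, hhY⟩
      · exact absurd ⟨huQ, l, hl, hns⟩ hnex
      · exact ⟨h, hh, hhY⟩
    rw [hhf]
    simp only [dif_pos hex]
    exact hex.choose_spec.1
  · exact hDfin.coe_toFinset
  · intro d hd
    rw [← Finset.mem_coe, hDfin.coe_toFinset] at hd
    rcases hd with ⟨u, hu, rfl⟩ | ⟨u, hu, rfl⟩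
    · obtain ⟨huQ, hex⟩ := hu
      rw [hbf]
      simp only [dif_pos hex]
      rw [satLit_negate]
      exact hex.choose_spec.2
    · obtain ⟨huQ, hnex⟩ := hu
      have hsel := sel u huQ
      have hex : ∃ a, a ∈ Hq q u ∧ a ∈ Y' := by
        rcases hsel with ⟨l, hl, hns⟩ | ⟨h, hh, hhY⟩
        · exact absurd ⟨huQ, l, hl, hns⟩ hnex
        · exact ⟨h, hh, hhY⟩
      rw [hhf]
      simp only [dif_pos hex]
      exact hex.choose_spec.2

/-- Elements of a dual set are singly or doubly negated literals, so their
satisfaction does not depend on the `X` component. -/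
lemma dual_mem_shape {q : α} {Q : Set (Rule α)} {D : Finset (Lit α)}
    (hD : D ∈ Dual q Q) {d : Lit α} (hd : d ∈ D) :
    (∃ a, d = Lit.neg a) ∨ ∃ a, d = Lit.nneg a := by
  obtain ⟨F, T, bf, hf, hFT, hdisj, hbf, hhf, hcoe⟩ := hD
  have : (d : Lit α) ∈ (↑D : Set (Lit α)) := hd
  rw [hcoe] at this
  rcases this with ⟨u, hu, rfl⟩ | ⟨u, hu, rfl⟩
  · have key : ∀ l : Lit α, (∃ a, l.negate = Lit.neg a) ∨ ∃ a, l.negate = Lit.nneg a := by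
      intro l
      cases l
      · exact Or.inl ⟨_, rfl⟩
      · exact Or.inr ⟨_, rfl⟩
      · exact Or.inl ⟨_, rfl⟩
    exact key (bf u)
  · exact Or.inr ⟨hf u, rfl⟩

lemma satLit_htLit_nopos {X Y : Finset α} {d : Lit α}
    (h : (∃ a, d = Lit.neg a) ∨ ∃ a, d = Lit.nneg a) :
    htLit X Y d ↔ satLit Y d := by
  rcases h with ⟨a, rfl⟩ | ⟨a, rfl⟩ <;> rfl

/-- Extract a contradiction witness from a satisfied dual set. -/
lemma dual_elim {q : α} {Y' : Finset α} {Q : Set (Rule α)} {D : Finset (Lit α)}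
    (hD : D ∈ Dual q Q) (hsat : ∀ d ∈ D, satLit Y' d) {u : Rule α} (hu : u ∈ Q) :
    (∃ l ∈ Bq q u, ¬ satLit Y' l) ∨ ∃ h ∈ Hq q u, h ∈ Y' := by
  obtain ⟨F, T, bf, hf, hFT, hdisj, hbf, hhf, hcoe⟩ := hD
  rw [← hFT] at hu
  rcases hu with hu | hu
  · left
    refine ⟨bf u, hbf u hu, ?_⟩
    rw [← satLit_negate]
    apply hsat
    rw [← Finset.mem_coe, hcoe]
    exact Or.inl ⟨u, hu, rfl⟩
  · right
    refine ⟨hf u, hhf u hu, ?_⟩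
    have : satLit Y' (Lit.nneg (hf u)) := by
      apply hsat
      rw [← Finset.mem_coe, hcoe]
      exact Or.inr ⟨u, hu, rfl⟩
    exact this

/-- Disjointness constraint for rules (4) and (5). -/
lemma dual_disj_notL {Y' : Finset α} {D : Finset (Lit α)} {S : Finset (Lit α)}
    (hD : ∀ d ∈ D, satLit Y' d) (hS : ∀ l ∈ S, satLit Y' l) :
    D ∩ notL S = ∅ := by
  rw [Finset.eq_empty_iff_forall_notMem]
  intro d hd
  rw [Finset.mem_inter] at hd
  obtain ⟨hdD, hdS⟩ := hd
  rw [notL, Finset.mem_image] at hdS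
  obtain ⟨l, hl, rfl⟩ := hdS
  have := hD _ hdD
  rw [satLit_negate] at this
  exact this (hS l hl)

end DualLem
/-! ### Helper lemmas for the main case analyses -/

section Helpers
variable {α : Type*} [DecidableEq α]
set_option linter.unusedSectionVars false

lemma mem_Yq {Y : Finset α} {q a : α} : a ∈ Y \ {q} ↔ a ∈ Y ∧ a ≠ q := by
  simp [Finset.mem_sdiff]

lemma notA_sat {I : Finset α} {A : Finset α} :
    (∀ l ∈ notA A, satLit I l) ↔ ∀ a ∈ A, a ∉ I := by
  constructor
  · intro h a ha
    exact h (Lit.neg a) (Finset.mem_image_of_mem _ ha)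
  · rintro h l hl
    rw [notA, Finset.mem_image] at hl
    obtain ⟨a, ha, rfl⟩ := hl
    exact h a ha

lemma dnegL_sat {I : Finset α} {S : Finset (Lit α)} :
    (∀ l ∈ dnegL S, satLit I l) ↔ ∀ l ∈ S, satLit I l := by
  constructor
  · intro h l hl
    rw [← satLit_dneg]
    exact h _ (Finset.mem_image_of_mem _ hl)
  · rintro h l hl
    rw [dnegL, Finset.mem_image] at hl
    obtain ⟨l', hl', rfl⟩ := hl
    rw [satLit_dneg]
    exact h l' hl'

lemma notA_ht {X Y : Finset α} {A : Finset α} :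
    (∀ l ∈ notA A, htLit X Y l) ↔ ∀ a ∈ A, a ∉ Y := by
  constructor
  · intro h a ha
    exact h (Lit.neg a) (Finset.mem_image_of_mem _ ha)
  · rintro h l hl
    rw [notA, Finset.mem_image] at hl
    obtain ⟨a, ha, rfl⟩ := hl
    exact h a ha

lemma dnegL_ht {X Y : Finset α} {S : Finset (Lit α)} :
    (∀ l ∈ dnegL S, htLit X Y l) ↔ ∀ l ∈ S, satLit Y l := by
  constructor
  · intro h l hl
    rw [← htLit_dneg (X := X)]
    exact h _ (Finset.mem_image_of_mem _ hl)
  · rintro h l hl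
    rw [dnegL, Finset.mem_image] at hl
    obtain ⟨l', hl', rfl⟩ := hl
    rw [htLit_dneg]
    exact h l' hl'

variable {P : Set (Rule α)} {q : α} {Y : Finset α}

/-- Full body satisfaction by `Y` from `Bq` satisfaction by `Y\{q}`,
given the q-literals are handled. -/
lemma body_sat_of_Bq {s : Rule α}
    (hq : ∀ l ∈ s.body, l.atom = q → satLit Y l)
    (hB : ∀ l ∈ Bq q s, satLit (Y \ {q}) l) :
    ∀ l ∈ s.body, satLit Y l := by
  intro l hl
  by_cases h : l.atom = q
  · exact hq l hl h
  · exact (satLit_transfer h).1 (hB l (mem_Bq.2 ⟨hl, h⟩))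

/-- Firing an R0 rule when q ∈ Y. -/
lemma fire0 (hY : clSat Y (NF P)) {r0 : Rule α} (hr0 : r0 ∈ p0 (NF P) q) (hqY : q ∈ Y)
    (hB : ∀ l ∈ Bq q r0, satLit (Y \ {q}) l) : ∃ b ∈ r0.head, b ∈ Y \ {q} := by
  obtain ⟨hmem, hpq⟩ := hr0
  have hfull : ∀ l ∈ r0.body, satLit Y l := by
    apply body_sat_of_Bq _ hB
    intro l hl hatom
    rcases atom_eq_cases hatom with rfl | rfl | rfl
    · exact hqY
    · exact absurd hl (nf_fact_pos hmem hpq).2.1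
    · exact absurd hl (nf_fact_pos hmem hpq).2.2
  obtain ⟨b, hb⟩ := hY r0 hmem hfull
  rw [Finset.mem_inter] at hb
  refine ⟨b, hb.1, mem_Yq.2 ⟨hb.2, ?_⟩⟩
  rintro rfl
  exact (nf_fact_pos hmem hpq).1 hb.1

/-- Firing an R2 rule when q ∈ Y. -/
lemma fire2 (hY : clSat Y (NF P)) {r2 : Rule α} (hr2 : r2 ∈ p2 (NF P) q) (hqY : q ∈ Y)
    (hB : ∀ l ∈ Bq q r2, satLit (Y \ {q}) l) : ∃ b ∈ r2.head, b ∈ Y \ {q} := by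
  obtain ⟨hmem, hnnq, hqh⟩ := hr2
  have hfull : ∀ l ∈ r2.body, satLit Y l := by
    apply body_sat_of_Bq _ hB
    intro l hl hatom
    rcases atom_eq_cases hatom with rfl | rfl | rfl
    · exact absurd hl (nf_fact_nneg hmem hnnq).1
    · exact absurd hl (nf_fact_nneg hmem hnnq).2
    · exact hqY
  obtain ⟨b, hb⟩ := hY r2 hmem hfull
  rw [Finset.mem_inter] at hb
  refine ⟨b, hb.1, mem_Yq.2 ⟨hb.2, ?_⟩⟩
  rintro rfl
  exact hqh hb.1

/-- Firing an R1 rule when q ∉ Y. -/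
lemma fire1 (hY : clSat Y (NF P)) {r1 : Rule α} (hr1 : r1 ∈ p1 (NF P) q) (hqY : q ∉ Y)
    (hB : ∀ l ∈ Bq q r1, satLit (Y \ {q}) l) : ∃ b ∈ r1.head, b ∈ Y \ {q} := by
  obtain ⟨hmem, hnq⟩ := hr1
  have hfull : ∀ l ∈ r1.body, satLit Y l := by
    apply body_sat_of_Bq _ hB
    intro l hl hatom
    rcases atom_eq_cases hatom with rfl | rfl | rfl
    · exact absurd hl (nf_fact_neg hmem hnq).2.1
    · exact hqY
    · exact absurd hl (nf_fact_neg hmem hnq).2.2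
  obtain ⟨b, hb⟩ := hY r1 hmem hfull
  rw [Finset.mem_inter] at hb
  refine ⟨b, hb.1, mem_Yq.2 ⟨hb.2, ?_⟩⟩
  rintro rfl
  exact (nf_fact_neg hmem hnq).1 hb.1

/-- The body of an R4 rule is q-free. -/
lemma r4_body_qfree {r4 : Rule α} (hr4 : r4 ∈ p4 (NF P) q) :
    ∀ l ∈ r4.body, l.atom ≠ q := by
  obtain ⟨hmem, hnnq, hqh⟩ := hr4
  intro l hl hatom
  rcases atom_eq_cases hatom with rfl | rfl | rfl
  · exact (nf_fact_head hmem hqh).1 hl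
  · exact (nf_fact_head hmem hqh).2 hl
  · exact hnnq hl

/-- Firing an R4 rule. -/
lemma fire4 (hY : clSat Y (NF P)) {r4 : Rule α} (hr4 : r4 ∈ p4 (NF P) q)
    (hB : ∀ l ∈ r4.body, satLit (Y \ {q}) l) :
    (∃ b ∈ Hq q r4, b ∈ Y \ {q}) ∨ q ∈ Y := by
  have hfull : ∀ l ∈ r4.body, satLit Y l := fun l hl =>
    (satLit_transfer (r4_body_qfree hr4 l hl)).1 (hB l hl)
  obtain ⟨b, hb⟩ := hY r4 hr4.1 hfull
  rw [Finset.mem_inter] at hb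
  by_cases hbq : b = q
  · exact Or.inr (hbq ▸ hb.2)
  · exact Or.inl ⟨b, mem_Hq.2 ⟨hb.1, hbq⟩, mem_Yq.2 ⟨hb.2, hbq⟩⟩

/-- Contradiction from an R1∪R4 rule whose q-free body is satisfied and whose
q-free head is false, when q ∉ Y. -/
lemma r14_contra (hY : clSat Y (NF P)) {r' : Rule α}
    (hr' : r' ∈ p1 (NF P) q ∪ p4 (NF P) q) (hqY : q ∉ Y)
    (hB : ∀ l ∈ Bq q r', satLit (Y \ {q}) l)
    (hH : ∀ a ∈ Hq q r', a ∉ Y \ {q}) : False := by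
  rcases hr' with hr1 | hr4
  · obtain ⟨b, hb1, hb2⟩ := fire1 hY hr1 hqY hB
    have : b ≠ q := (mem_Yq.1 hb2).2
    exact hH b (mem_Hq.2 ⟨hb1, this⟩) hb2
  · have hB' : ∀ l ∈ r'.body, satLit (Y \ {q}) l := by
      intro l hl
      exact hB l (mem_Bq.2 ⟨hl, r4_body_qfree hr4 l hl⟩)
    rcases fire4 hY hr4 hB' with ⟨b, hb1, hb2⟩ | hq
    · exact hH b hb1 hb2
    · exact hqY hq

/-- Contradiction from an R0∪R2 rule whose q-free body is satisfied and whose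
head is false, when q ∈ Y. -/
lemma r02_contra (hY : clSat Y (NF P)) {r : Rule α}
    (hr : r ∈ p0 (NF P) q ∪ p2 (NF P) q) (hqY : q ∈ Y)
    (hB : ∀ l ∈ Bq q r, satLit (Y \ {q}) l)
    (hH : ∀ a ∈ r.head, a ∉ Y \ {q}) : False := by
  rcases hr with hr0 | hr2
  · obtain ⟨b, hb1, hb2⟩ := fire0 hY hr0 hqY hB
    exact hH b hb1 hb2
  · obtain ⟨b, hb1, hb2⟩ := fire2 hY hr2 hqY hB
    exact hH b hb1 hb2

/-- Extraction of the q-minimality witness rule `r*`. -/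
lemma rstar_extract (hY : clSat Y (NF P))
    (hfail : ¬ clSat (Y \ {q}) (reduct (NF P) Y)) :
    ∃ rs ∈ NF P, q ∈ rs.head ∧ (∀ l ∈ rs.body, htLit (Y \ {q}) Y l) ∧
      ∀ a ∈ rs.head, a ∉ Y \ {q} := by
  rw [reduct_sat_iff] at hfail
  push_neg at hfail
  obtain ⟨r, hr, hbody, hhead⟩ := hfail
  rw [← Finset.disjoint_iff_inter_eq_empty] at hhead
  have hsatY : ∀ l ∈ r.body, satLit Y l := fun l hl =>
    htLit_to_sat Finset.sdiff_subset (hbody l hl)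
  obtain ⟨b, hb⟩ := hY r hr hsatY
  rw [Finset.mem_inter] at hb
  have hbq : b = q := by
    by_contra hne
    exact (Finset.disjoint_left.1 hhead) hb.1 (mem_Yq.2 ⟨hb.2, hne⟩)
  refine ⟨r, hr, hbq ▸ hb.1, hbody, fun a ha => Finset.disjoint_left.1 hhead ha⟩

/-- The q-minimality witness is in R3 ∪ R4. -/
lemma rstar_class {rs : Rule α} (hmem : rs ∈ NF P) (hqh : q ∈ rs.head) :
    rs ∈ p3 (NF P) q ∪ p4 (NF P) q := by
  by_cases hnnq : Lit.nneg q ∈ rs.body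
  · exact Or.inl ⟨hmem, hnnq, hqh⟩
  · exact Or.inr ⟨hmem, hnnq, hqh⟩

/-- The `Bq` part of the witness rule is satisfied by `Y\{q}`. -/
lemma rstar_Bq_sat {rs : Rule α} (hbody : ∀ l ∈ rs.body, htLit (Y \ {q}) Y l) :
    ∀ l ∈ Bq q rs, satLit (Y \ {q}) l := by
  intro l hl
  rw [mem_Bq] at hl
  have := hbody l hl.1
  cases l with
  | pos a => exact this
  | neg a => exact fun h => this (Finset.sdiff_subset h)
  | nneg a =>
    exact mem_Yq.2 ⟨this, by simpa [Lit.atom] using hl.2⟩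

/-- Contradiction from a satisfied dual set over a domain containing `r*`. -/
lemma star_dual_contra {rs : Rule α} {Q : Set (Rule α)} {D : Finset (Lit α)}
    (hD : D ∈ Dual q Q) (hrs : rs ∈ Q)
    (hbody : ∀ l ∈ rs.body, htLit (Y \ {q}) Y l)
    (hH : ∀ a ∈ rs.head, a ∉ Y \ {q})
    (hsat : ∀ d ∈ D, satLit (Y \ {q}) d) : False := by
  rcases dual_elim hD hsat hrs with ⟨l, hl, hns⟩ | ⟨h, hh, hhY⟩
  · exact hns (rstar_Bq_sat hbody l hl)
  · exact hH h (mem_Hq.1 hh).1 hhY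

end Helpers
/-! ### Soundness: `Y\{q}` classically satisfies `fSPpre P q` -/

section Soundness
variable {α : Type*} [DecidableEq α]
set_option linter.unusedSectionVars false
variable {P : Set (Rule α)} {q : α} {Y : Finset α}

lemma soundness (hY : clSat Y (NF P))
    (hmin : q ∈ Y → ¬ clSat (Y \ {q}) (reduct (NF P) Y)) :
    clSat (Y \ {q}) (fSPpre P q) := by
  intro s hs hb
  set Y' := Y \ {q} with hY'
  rcases hs with ((((((((((h | h) | h) | h) | h) | h) | h) | h) | h) | h) | h)
  · -- pR
    obtain ⟨hmem, hqs⟩ := h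
    have hqh : ∀ a ∈ s.head, a ≠ q := by
      rintro a ha rfl
      exact hqs (Finset.mem_union_left _ ha)
    have hqb : ∀ l ∈ s.body, l.atom ≠ q := by
      intro l hl hatom
      exact hqs (Finset.mem_union_right _ (hatom ▸ Finset.mem_image_of_mem _ hl))
    have hfull : ∀ l ∈ s.body, satLit Y l := fun l hl =>
      (satLit_transfer (hqb l hl)).1 (hb l hl)
    obtain ⟨b, hbb⟩ := hY s hmem hfull
    rw [Finset.mem_inter] at hbb
    exact ⟨b, Finset.mem_inter.2 ⟨hbb.1, mem_Yq.2 ⟨hbb.2, hqh b hbb.1⟩⟩⟩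
  · -- gen1a
    obtain ⟨r0, hr0, r4, hr4, rfl⟩ := h
    have hb0 : ∀ l ∈ Bq q r0, satLit Y' l := fun l hl => hb l (Finset.mem_union_left _ hl)
    have hb4 : ∀ l ∈ r4.body, satLit Y' l := fun l hl => hb l (Finset.mem_union_right _ hl)
    rcases fire4 hY hr4 hb4 with ⟨b, hb1, hb2⟩ | hq
    · exact ⟨b, Finset.mem_inter.2 ⟨Finset.mem_union_right _ hb1, hb2⟩⟩
    · obtain ⟨b, hb1, hb2⟩ := fire0 hY hr0 hq hb0
      exact ⟨b, Finset.mem_inter.2 ⟨Finset.mem_union_left _ hb1, hb2⟩⟩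
  · -- gen2a
    obtain ⟨r0, hr0, r3, hr3, r', hr', rfl⟩ := h
    have hb0 : ∀ l ∈ Bq q r0, satLit Y' l := fun l hl =>
      hb l (Finset.mem_union_left _ (Finset.mem_union_left _ (Finset.mem_union_left _ hl)))
    have hbH : ∀ a ∈ Hq q r', a ∉ Y' := notA_sat.1 fun l hl =>
      hb l (Finset.mem_union_left _ (Finset.mem_union_right _ hl))
    have hbB : ∀ l ∈ Bq q r', satLit Y' l := dnegL_sat.1 fun l hl =>
      hb l (Finset.mem_union_right _ hl)
    by_cases hq : q ∈ Y
    · obtain ⟨b, hb1, hb2⟩ := fire0 hY hr0 hq hb0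
      exact ⟨b, Finset.mem_inter.2 ⟨Finset.mem_union_left _ hb1, hb2⟩⟩
    · exact absurd (r14_contra hY hr' hq hbB hbH) not_false
  · -- gen3a
    obtain ⟨r0, hr0, r3, hr3, hh, hhr, D, hD, rfl⟩ := h
    have : satLit Y' (Lit.nneg hh) := hb _ (Finset.mem_union_left _ (Finset.mem_union_left _
      (Finset.mem_union_left _ (Finset.mem_union_right _ (Finset.mem_singleton_self _)))))
    exact ⟨hh, Finset.mem_inter.2 ⟨hhr, this⟩⟩
  · -- gen1b
    obtain ⟨r2, hr2, r4, hr4, rfl⟩ := h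
    have hb2 : ∀ l ∈ Bq q r2, satLit Y' l := fun l hl =>
      hb l (Finset.mem_union_left _ (Finset.mem_union_left _ hl))
    have hbH : ∀ a ∈ Hq q r4, a ∉ Y' := notA_sat.1 fun l hl =>
      hb l (Finset.mem_union_left _ (Finset.mem_union_right _ hl))
    have hb4 : ∀ l ∈ r4.body, satLit Y' l := dnegL_sat.1 fun l hl =>
      hb l (Finset.mem_union_right _ hl)
    rcases fire4 hY hr4 hb4 with ⟨b, hb1, hb2'⟩ | hq
    · exact absurd (hbH b hb1 hb2') not_false
    · obtain ⟨b, hb1, hb2'⟩ := fire2 hY hr2 hq hb2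
      exact ⟨b, Finset.mem_inter.2 ⟨hb1, hb2'⟩⟩
  · -- gen2b
    obtain ⟨r2, hr2, r3, hr3, r', hr', rfl⟩ := h
    have hb2 : ∀ l ∈ Bq q r2, satLit Y' l := fun l hl =>
      hb l (Finset.mem_union_left _ (Finset.mem_union_left _ hl))
    have hbH : ∀ a ∈ Hq q r', a ∉ Y' := by
      have := notA_sat.1 fun l hl =>
        hb l (Finset.mem_union_left _ (Finset.mem_union_right _ hl))
      intro a ha
      exact this a (Finset.mem_union_right _ ha)
    have hbB : ∀ l ∈ Bq q r', satLit Y' l := by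
      have := dnegL_sat.1 fun l hl => hb l (Finset.mem_union_right _ hl)
      intro l hl
      exact this l (Finset.mem_union_right _ hl)
    by_cases hq : q ∈ Y
    · obtain ⟨b, hb1, hb2'⟩ := fire2 hY hr2 hq hb2
      exact ⟨b, Finset.mem_inter.2 ⟨hb1, hb2'⟩⟩
    · exact absurd (r14_contra hY hr' hq hbB hbH) not_false
  · -- gen3b
    obtain ⟨r2, hr2, r3, hr3, hh, hhr, D, hD, rfl⟩ := h
    have : satLit Y' (Lit.nneg hh) := hb _ (Finset.mem_union_left _
      (Finset.mem_union_right _ (Finset.mem_singleton_self _)))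
    exact ⟨hh, Finset.mem_inter.2 ⟨hhr, this⟩⟩
  · -- gen4
    obtain ⟨r', hr', D, hD, hdisj, rfl⟩ := h
    have hbB : ∀ l ∈ Bq q r', satLit Y' l := fun l hl => hb l (Finset.mem_union_left _ hl)
    have hbD : ∀ d ∈ D, satLit Y' d := fun d hd => hb d (Finset.mem_union_right _ hd)
    by_cases hq : q ∈ Y
    · obtain ⟨rs, hrs, hrsq, hrsb, hrsH⟩ := rstar_extract hY (hmin hq)
      exact absurd (star_dual_contra hD (rstar_class hrs hrsq) hrsb hrsH hbD) not_false
    · rcases hr' with hr1 | hr4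
      · obtain ⟨b, hb1, hb2⟩ := fire1 hY hr1 hq hbB
        exact ⟨b, Finset.mem_inter.2 ⟨mem_Hq.2 ⟨hb1, (mem_Yq.1 hb2).2⟩, hb2⟩⟩
      · have hB' : ∀ l ∈ r'.body, satLit Y' l := fun l hl =>
          hbB l (mem_Bq.2 ⟨hl, r4_body_qfree hr4 l hl⟩)
        rcases fire4 hY hr4 hB' with ⟨b, hb1, hb2⟩ | hqq
        · exact ⟨b, Finset.mem_inter.2 ⟨hb1, hb2⟩⟩
        · exact absurd hqq hq
  · -- gen5
    obtain ⟨r', hr', r3, hr3, r, hr, D, hD, hdisj, rfl⟩ := h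
    have hbB : ∀ l ∈ Bq q r', satLit Y' l := fun l hl =>
      hb l (Finset.mem_union_left _ (Finset.mem_union_left _ (Finset.mem_union_left _ hl)))
    have hbHr : ∀ a ∈ r.head, a ∉ Y' := by
      have := notA_sat.1 fun l hl => hb l (Finset.mem_union_left _
        (Finset.mem_union_left _ (Finset.mem_union_right _ hl)))
      intro a ha
      exact this a (Finset.mem_union_left _ ha)
    have hbBr : ∀ l ∈ Bq q r, satLit Y' l := by
      have := dnegL_sat.1 fun l hl =>
        hb l (Finset.mem_union_left _ (Finset.mem_union_right _ hl))
      intro l hl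
      exact this l (Finset.mem_union_left _ hl)
    by_cases hq : q ∈ Y
    · exact absurd (r02_contra hY hr hq hbBr hbHr) not_false
    · rcases hr' with hr1 | hr4
      · obtain ⟨b, hb1, hb2⟩ := fire1 hY hr1 hq hbB
        exact ⟨b, Finset.mem_inter.2 ⟨mem_Hq.2 ⟨hb1, (mem_Yq.1 hb2).2⟩, hb2⟩⟩
      · have hB' : ∀ l ∈ r'.body, satLit Y' l := fun l hl =>
          hbB l (mem_Bq.2 ⟨hl, r4_body_qfree hr4 l hl⟩)
        rcases fire4 hY hr4 hB' with ⟨b, hb1, hb2⟩ | hqq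
        · exact ⟨b, Finset.mem_inter.2 ⟨hb1, hb2⟩⟩
        · exact absurd hqq hq
  · -- gen6
    obtain ⟨r', hr', r3, hr3, hh, hhr, D, hD, rfl⟩ := h
    have hsat : satLit Y' (Lit.nneg hh) := hb _ (Finset.mem_union_left _
      (Finset.mem_union_right _ (Finset.mem_singleton_self _)))
    have hhY : hh ∈ Y' := hsat
    exact ⟨hh, Finset.mem_inter.2 ⟨mem_Hq.2 ⟨hhr, (mem_Yq.1 hhY).2⟩, hhY⟩⟩
  · -- gen7
    obtain ⟨r0, hr0, r3, hr3, r3', hr3', hne, D, hD, hh, hhr, rfl⟩ := h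
    have hsat : satLit Y' (Lit.nneg hh) := hb _ (Finset.mem_union_left _
      (Finset.mem_union_right _ (Finset.mem_singleton_self _)))
    exact ⟨hh, Finset.mem_inter.2 ⟨Finset.mem_union_left _ hhr, hsat⟩⟩

end Soundness
/-! ### Selection lemmas and fSPpre membership -/

section SelLem
variable {α : Type*} [DecidableEq α]
set_option linter.unusedSectionVars false
variable {P : Set (Rule α)} {q : α} {Y : Finset α}

lemma mem_fSPpre_pR {s : Rule α} (h : s ∈ pR (NF P) q) : s ∈ fSPpre P q :=
  Set.mem_union_left _ (Set.mem_union_left _ (Set.mem_union_left _ (Set.mem_union_left _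
    (Set.mem_union_left _ (Set.mem_union_left _ (Set.mem_union_left _ (Set.mem_union_left _
      (Set.mem_union_left _ (Set.mem_union_left _ h)))))))))

lemma mem_fSPpre_1a {s : Rule α} (h : s ∈ gen1a P q) : s ∈ fSPpre P q :=
  Set.mem_union_left _ (Set.mem_union_left _ (Set.mem_union_left _ (Set.mem_union_left _
    (Set.mem_union_left _ (Set.mem_union_left _ (Set.mem_union_left _ (Set.mem_union_left _
      (Set.mem_union_left _ (Set.mem_union_right _ h)))))))))

lemma mem_fSPpre_2a {s : Rule α} (h : s ∈ gen2a P q) : s ∈ fSPpre P q :=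
  Set.mem_union_left _ (Set.mem_union_left _ (Set.mem_union_left _ (Set.mem_union_left _
    (Set.mem_union_left _ (Set.mem_union_left _ (Set.mem_union_left _ (Set.mem_union_left _
      (Set.mem_union_right _ h))))))))

lemma mem_fSPpre_3a {s : Rule α} (h : s ∈ gen3a P q) : s ∈ fSPpre P q :=
  Set.mem_union_left _ (Set.mem_union_left _ (Set.mem_union_left _ (Set.mem_union_left _
    (Set.mem_union_left _ (Set.mem_union_left _ (Set.mem_union_left _
      (Set.mem_union_right _ h)))))))

lemma mem_fSPpre_1b {s : Rule α} (h : s ∈ gen1b P q) : s ∈ fSPpre P q :=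
  Set.mem_union_left _ (Set.mem_union_left _ (Set.mem_union_left _ (Set.mem_union_left _
    (Set.mem_union_left _ (Set.mem_union_left _ (Set.mem_union_right _ h))))))

lemma mem_fSPpre_2b {s : Rule α} (h : s ∈ gen2b P q) : s ∈ fSPpre P q :=
  Set.mem_union_left _ (Set.mem_union_left _ (Set.mem_union_left _ (Set.mem_union_left _
    (Set.mem_union_left _ (Set.mem_union_right _ h)))))

lemma mem_fSPpre_3b {s : Rule α} (h : s ∈ gen3b P q) : s ∈ fSPpre P q :=
  Set.mem_union_left _ (Set.mem_union_left _ (Set.mem_union_left _ (Set.mem_union_left _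
    (Set.mem_union_right _ h))))

lemma mem_fSPpre_4 {s : Rule α} (h : s ∈ gen4 P q) : s ∈ fSPpre P q :=
  Set.mem_union_left _ (Set.mem_union_left _ (Set.mem_union_left _ (Set.mem_union_right _ h)))

lemma mem_fSPpre_5 {s : Rule α} (h : s ∈ gen5 P q) : s ∈ fSPpre P q :=
  Set.mem_union_left _ (Set.mem_union_left _ (Set.mem_union_right _ h))

lemma mem_fSPpre_6 {s : Rule α} (h : s ∈ gen6 P q) : s ∈ fSPpre P q :=
  Set.mem_union_left _ (Set.mem_union_right _ h)

lemma mem_fSPpre_7 {s : Rule α} (h : s ∈ gen7 P q) : s ∈ fSPpre P q :=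
  Set.mem_union_right _ h

/-- R0 ∪ R2 rules are always selectable when q ∈ Y. -/
lemma sel02 (hY : clSat Y (NF P)) (hq : q ∈ Y) :
    ∀ u ∈ p0 (NF P) q ∪ p2 (NF P) q, Sel (Y \ {q}) q u := by
  intro u hu
  by_cases hex : ∃ l ∈ Bq q u, ¬ satLit (Y \ {q}) l
  · exact Or.inl hex
  · push_neg at hex
    right
    rcases hu with h0 | h2
    · obtain ⟨b, hb1, hb2⟩ := fire0 hY h0 hq hex
      exact ⟨b, mem_Hq.2 ⟨hb1, (mem_Yq.1 hb2).2⟩, hb2⟩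
    · obtain ⟨b, hb1, hb2⟩ := fire2 hY h2 hq hex
      exact ⟨b, mem_Hq.2 ⟨hb1, (mem_Yq.1 hb2).2⟩, hb2⟩

/-- R1 ∪ R4 rules are always selectable when q ∉ Y. -/
lemma sel14 (hY : clSat Y (NF P)) (hq : q ∉ Y) :
    ∀ u ∈ p1 (NF P) q ∪ p4 (NF P) q, Sel (Y \ {q}) q u := by
  intro u hu
  by_cases hex : ∃ l ∈ Bq q u, ¬ satLit (Y \ {q}) l
  · exact Or.inl hex
  · push_neg at hex
    right
    rcases hu with h1 | h4
    · obtain ⟨b, hb1, hb2⟩ := fire1 hY h1 hq hex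
      exact ⟨b, mem_Hq.2 ⟨hb1, (mem_Yq.1 hb2).2⟩, hb2⟩
    · have hB : ∀ l ∈ u.body, satLit (Y \ {q}) l := fun l hl =>
        hex l (mem_Bq.2 ⟨hl, r4_body_qfree h4 l hl⟩)
      rcases fire4 hY h4 hB with ⟨b, hb1, hb2⟩ | hqq
      · exact ⟨b, hb1, hb2⟩
      · exact absurd hqq hq

/-- R4 rules are always selectable when q ∉ Y. -/
lemma sel4 (hY : clSat Y (NF P)) (hq : q ∉ Y) :
    ∀ u ∈ p4 (NF P) q, Sel (Y \ {q}) q u := fun u hu =>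
  sel14 hY hq u (Or.inr hu)

/-- A failing q-free rule yields a contradiction with `⟨X, Y\{q}⟩ ⊨ fSPpre`. -/
lemma liftpR {r : Rule α} {X : Finset α} (hr : r ∈ pR (NF P) q)
    (hbody : ∀ l ∈ r.body, htLit X Y l) (hH : ∀ a ∈ r.head, a ∉ X)
    (hht : ∀ s ∈ fSPpre P q, (∀ l ∈ s.body, htLit X (Y \ {q}) l) → (s.head ∩ X).Nonempty) :
    False := by
  have hqb : ∀ l ∈ r.body, l.atom ≠ q := by
    intro l hl hatom
    exact hr.2 (Finset.mem_union_right _ (hatom ▸ Finset.mem_image_of_mem _ hl))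
  obtain ⟨b, hb⟩ := hht r (mem_fSPpre_pR hr) fun l hl =>
    (htLit_transfer (hqb l hl)).2 (hbody l hl)
  rw [Finset.mem_inter] at hb
  exact hH b hb.1 hb.2

/-- Shared path: a failing R2 rule at `⟨X,Y⟩` (with q ∈ Y) is a contradiction. -/
lemma liftP2 (hP : P.Finite) (hY : clSat Y (NF P)) {X : Finset α}
    (hXY : X ⊆ Y \ {q}) (hq : q ∈ Y)
    {rs : Rule α} (hrs : rs ∈ NF P) (hrsq : q ∈ rs.head)
    (hrsb : ∀ l ∈ rs.body, htLit (Y \ {q}) Y l) (hrsH : ∀ a ∈ rs.head, a ∉ Y \ {q})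
    {r2 : Rule α} (hr2 : r2 ∈ p2 (NF P) q)
    (hbody : ∀ l ∈ r2.body, htLit X Y l) (hH : ∀ a ∈ r2.head, a ∉ X)
    (hht : ∀ s ∈ fSPpre P q, (∀ l ∈ s.body, htLit X (Y \ {q}) l) → (s.head ∩ X).Nonempty) :
    False := by
  have hXY' : X ⊆ Y := hXY.trans Finset.sdiff_subset
  have hBq2 : ∀ l ∈ Bq q r2, htLit X (Y \ {q}) l := fun l hl =>
    (htLit_transfer (mem_Bq.1 hl).2).2 (hbody l (mem_Bq.1 hl).1)
  rcases rstar_class hrs hrsq with hp3 | hp4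
  · -- rs ∈ R3 : use rule3b
    have hsat2 : ∀ l ∈ r2.body, satLit Y l := fun l hl => htLit_to_sat hXY' (hbody l hl)
    obtain ⟨b, hb⟩ := hY r2 hr2.1 hsat2
    rw [Finset.mem_inter] at hb
    have hbq : b ≠ q := by rintro rfl; exact hr2.2.2 hb.1
    have hbY' : b ∈ Y \ {q} := mem_Yq.2 ⟨hb.2, hbq⟩
    have hsub : (p0 (NF P) q ∪ p2 (NF P) q : Set (Rule α)) ⊆ NF P := by
      rintro u (hu | hu)
      exacts [hu.1, hu.1]
    have hfin : ((p0 (NF P) q ∪ p2 (NF P) q) \ {r2} : Set (Rule α)).Finite :=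
      ((NF_finite hP).subset hsub).subset Set.diff_subset
    obtain ⟨D, hD, hsatD⟩ := dual_build hfin fun u hu => sel02 hY hq u hu.1
    have hmem : rule3b q r2 rs b D ∈ gen3b P q := ⟨r2, hr2, rs, hp3, b, hb.1, D, hD, rfl⟩
    obtain ⟨c, hc⟩ := hht _ (mem_fSPpre_3b hmem) (by
      intro l hl
      rcases Finset.mem_union.1 hl with hl | hl
      · rcases Finset.mem_union.1 hl with hl | hl
        · rcases Finset.mem_union.1 hl with hl | hl
          · rcases Finset.mem_union.1 hl with hl | hl
            · exact hBq2 l hl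
            · obtain ⟨a, ha, rfl⟩ := Finset.mem_image.1 hl
              exact hrsH a (mem_Hq.1 ha).1
          · obtain ⟨l', hl', rfl⟩ := Finset.mem_image.1 hl
            rw [htLit_dneg]
            exact rstar_Bq_sat hrsb l' hl'
        · rw [Finset.mem_singleton] at hl
          subst hl
          exact hbY'
      · rcases dual_mem_shape hD hl with hsh | hsh <;>
          exact (satLit_htLit_nopos (Or.imp id id (by tauto))).2 (hsatD l hl))
    rw [Finset.mem_inter] at hc
    exact hH c hc.1 hc.2
  · -- rs ∈ R4 : use rule1b
    have hmem : rule1b q r2 rs ∈ gen1b P q := ⟨r2, hr2, rs, hp4, rfl⟩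
    obtain ⟨c, hc⟩ := hht _ (mem_fSPpre_1b hmem) (by
      intro l hl
      rcases Finset.mem_union.1 hl with hl | hl
      · rcases Finset.mem_union.1 hl with hl | hl
        · exact hBq2 l hl
        · obtain ⟨a, ha, rfl⟩ := Finset.mem_image.1 hl
          exact hrsH a (mem_Hq.1 ha).1
      · obtain ⟨l', hl', rfl⟩ := Finset.mem_image.1 hl
        rw [htLit_dneg]
        exact rstar_Bq_sat hrsb l' (mem_Bq.2 ⟨hl', r4_body_qfree hp4 l' hl'⟩))
    rw [Finset.mem_inter] at hc
    exact hH c hc.1 hc.2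

end SelLem
/-! ### Lifting: HT-countermodels of fSPpre lift to HT-countermodels of NF P -/

section Lifting
variable {α : Type*} [DecidableEq α]
set_option linter.unusedSectionVars false
variable {P : Set (Rule α)} {q : α} {Y : Finset α}

lemma htLit_uninsert {X Y : Finset α} {l : Lit α} (hlq : l.atom ≠ q)
    (h : htLit (insert q X) Y l) : htLit X Y l := by
  cases l with
  | pos a =>
    rcases Finset.mem_insert.1 h with rfl | h'
    · exact absurd rfl hlq
    · exact h'
  | neg a => exact h
  | nneg a => exact h

lemma classifyB (hq : q ∈ Y) {X : Finset α} {rb : Rule α} (hrb : rb ∈ NF P)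
    (hbodyb : ∀ l ∈ rb.body, htLit (insert q X) Y l)
    (hHb : ∀ a ∈ rb.head, a ∉ insert q X) :
    (rb ∈ pR (NF P) q ∧ ∀ l ∈ rb.body, htLit X Y l) ∨
    (rb ∈ p0 (NF P) q ∧ ∀ l ∈ Bq q rb, htLit X Y l) ∨
    (rb ∈ p2 (NF P) q ∧ ∀ l ∈ rb.body, htLit X Y l) := by
  by_cases hpos : Lit.pos q ∈ rb.body
  · exact Or.inr (Or.inl ⟨⟨hrb, hpos⟩, fun l hl =>
      htLit_uninsert (mem_Bq.1 hl).2 (hbodyb l (mem_Bq.1 hl).1)⟩)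
  by_cases hneg : Lit.neg q ∈ rb.body
  · exact absurd hq (hbodyb _ hneg)
  by_cases hnnq : Lit.nneg q ∈ rb.body
  · by_cases hqh : q ∈ rb.head
    · exact absurd (Finset.mem_insert_self q X) (hHb q hqh)
    · refine Or.inr (Or.inr ⟨⟨hrb, hnnq, hqh⟩, ?_⟩)
      intro l hl
      by_cases hlq : l.atom = q
      · rcases atom_eq_cases hlq with rfl | rfl | rfl
        · exact absurd hl hpos
        · exact absurd hl hneg
        · exact hq
      · exact htLit_uninsert hlq (hbodyb l hl)
  by_cases hqh : q ∈ rb.head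
  · exact absurd (Finset.mem_insert_self q X) (hHb q hqh)
  · refine Or.inl ⟨⟨hrb, ?_⟩, ?_⟩
    · intro hs
      rcases Finset.mem_union.1 hs with hs | hs
      · exact hqh hs
      · obtain ⟨l, hl, hatom⟩ := Finset.mem_image.1 hs
        rcases atom_eq_cases hatom with rfl | rfl | rfl
        · exact hpos hl
        · exact hneg hl
        · exact hnnq hl
    · intro l hl
      apply htLit_uninsert _ (hbodyb l hl)
      intro hatom
      rcases atom_eq_cases hatom with rfl | rfl | rfl
      · exact hpos hl
      · exact hneg hl
      · exact hnnq hl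

lemma lifting (hP : P.Finite) (hY : clSat Y (NF P))
    (hmin : q ∈ Y → ¬ clSat (Y \ {q}) (reduct (NF P) Y))
    {X : Finset α} (hX : X ⊆ Y \ {q})
    (hht : ∀ s ∈ fSPpre P q, (∀ l ∈ s.body, htLit X (Y \ {q}) l) → (s.head ∩ X).Nonempty) :
    ∃ Xh : Finset α, Xh \ {q} = X ∧ Xh ⊆ Y ∧ clSat Xh (reduct (NF P) Y) := by
  have hqX : q ∉ X := fun h => (mem_Yq.1 (hX h)).2 rfl
  have hXY' : X ⊆ Y := hX.trans Finset.sdiff_subset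
  have hXq : X \ {q} = X := by
    rw [Finset.sdiff_singleton_eq_erase, Finset.erase_eq_of_notMem hqX]
  have hNFfin := NF_finite hP
  by_cases hq : q ∈ Y
  · -- q ∈ Y : two candidates, both fail gives a contradiction
    obtain ⟨rs, hrs, hrsq, hrsb, hrsH⟩ := rstar_extract hY (hmin hq)
    by_contra hno
    have hfail1 : ¬ clSat X (reduct (NF P) Y) := fun hc => hno ⟨X, hXq, hXY', hc⟩
    have hfail2 : ¬ clSat (insert q X) (reduct (NF P) Y) := fun hc =>
      hno ⟨insert q X, by
        rw [Finset.sdiff_singleton_eq_erase, Finset.erase_insert hqX],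
        Finset.insert_subset hq hXY', hc⟩
    rw [reduct_sat_iff] at hfail1 hfail2
    push_neg at hfail1 hfail2
    obtain ⟨ra, hra, hbodya, hheada⟩ := hfail1
    obtain ⟨rb, hrb, hbodyb, hheadb⟩ := hfail2
    have hHa : ∀ a ∈ ra.head, a ∉ X := fun a ha hax =>
      Finset.nonempty_iff_ne_empty.1 ⟨a, Finset.mem_inter.2 ⟨ha, hax⟩⟩ hheada
    have hHb : ∀ a ∈ rb.head, a ∉ insert q X := fun a ha hax =>
      Finset.nonempty_iff_ne_empty.1 ⟨a, Finset.mem_inter.2 ⟨ha, hax⟩⟩ hheadb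
    have hHb' : ∀ a ∈ rb.head, a ∉ X := fun a ha hax =>
      hHb a ha (Finset.mem_insert_of_mem hax)
    -- classify the failing rule at ⟨X, Y⟩
    by_cases hposa : Lit.pos q ∈ ra.body
    · exact hqX (hbodya _ hposa)
    by_cases hnega : Lit.neg q ∈ ra.body
    · exact absurd hq (hbodya _ hnega)
    by_cases hpRa : q ∉ sigmaR ra
    · exact liftpR ⟨hra, hpRa⟩ hbodya hHa hht
    rw [not_not] at hpRa
    -- so ra ∈ p2 ∪ p3 ∪ p4
    have hBqa : ∀ l ∈ Bq q ra, htLit X (Y \ {q}) l := fun l hl =>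
      (htLit_transfer (mem_Bq.1 hl).2).2 (hbodya l (mem_Bq.1 hl).1)
    by_cases hnnqa : Lit.nneg q ∈ ra.body
    case pos =>
      by_cases hqha : q ∈ ra.head
      · -- ra ∈ p3 : analyse rb
        have hpa3 : ra ∈ p3 (NF P) q := ⟨hra, hnnqa, hqha⟩
        rcases classifyB hq hrb hbodyb hHb with ⟨hpRb, hb'⟩ | ⟨hp0, hBq0⟩ | ⟨hp2, hb'⟩
        · exact liftpR hpRb hb' hHb' hht
        · -- rb ∈ p0
          have hBq0' : ∀ l ∈ Bq q rb, htLit X (Y \ {q}) l := fun l hl =>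
            (htLit_transfer (mem_Bq.1 hl).2).2 (hBq0 l hl)
          have hBq0sat : ∀ l ∈ Bq q rb, satLit (Y \ {q}) l := fun l hl =>
            (satLit_transfer (mem_Bq.1 hl).2).2 (htLit_to_sat hXY' (hBq0 l hl))
          obtain ⟨b, hb1, hb2⟩ := fire0 hY hp0 hq hBq0sat
          rcases rstar_class hrs hrsq with hp3s | hp4s
          · have hsub : (p0 (NF P) q ∪ p2 (NF P) q : Set (Rule α)) ⊆ NF P := by
              rintro u (hu | hu)
              exacts [hu.1, hu.1]
            have hfin : ((p0 (NF P) q ∪ p2 (NF P) q) \ {rb} : Set (Rule α)).Finite :=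
              (hNFfin.subset hsub).subset Set.diff_subset
            obtain ⟨D, hD, hsatD⟩ := dual_build hfin fun u hu => sel02 hY hq u hu.1
            have hDht : ∀ d ∈ D, htLit X (Y \ {q}) d := fun d hd =>
              (satLit_htLit_nopos (dual_mem_shape hD hd)).2 (hsatD d hd)
            by_cases heq : rs = ra
            · -- use rule3a
              have hrsH' : ∀ a ∈ ra.head, a ∉ Y \ {q} := by
                rw [← heq]; exact hrsH
              have hmem : rule3a q rb ra b D ∈ gen3a P q :=
                ⟨rb, hp0, ra, hpa3, b, hb1, D, hD, rfl⟩
              obtain ⟨c, hc⟩ := hht _ (mem_fSPpre_3a hmem) (by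
                intro l hl
                rcases Finset.mem_union.1 hl with hl | hl
                · rcases Finset.mem_union.1 hl with hl | hl
                  · rcases Finset.mem_union.1 hl with hl | hl
                    · rcases Finset.mem_union.1 hl with hl | hl
                      · exact hBq0' l hl
                      · rw [Finset.mem_singleton] at hl
                        subst hl
                        exact hb2
                    · exact hDht l hl
                  · exact hBqa l hl
                · obtain ⟨a, ha, rfl⟩ := Finset.mem_image.1 hl
                  exact hrsH' a (mem_Hq.1 ha).1)
              rw [Finset.mem_inter] at hc
              exact hHb' c hc.1 hc.2
            · -- use rule7
              have hmem : rule7 q rb ra rs b D ∈ gen7 P q :=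
                ⟨rb, hp0, ra, hpa3, rs, hp3s, fun h => heq h.symm, D, hD, b, hb1, rfl⟩
              obtain ⟨c, hc⟩ := hht _ (mem_fSPpre_7 hmem) (by
                intro l hl
                rcases Finset.mem_union.1 hl with hl | hl
                · rcases Finset.mem_union.1 hl with hl | hl
                  · rcases Finset.mem_union.1 hl with hl | hl
                    · rcases Finset.mem_union.1 hl with hl | hl
                      · rcases Finset.mem_union.1 hl with hl | hl
                        · exact hBq0' l hl
                        · exact hBqa l hl
                      · obtain ⟨a, ha, rfl⟩ := Finset.mem_image.1 hl
                        exact hrsH a (mem_Hq.1 ha).1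
                    · obtain ⟨l', hl', rfl⟩ := Finset.mem_image.1 hl
                      rw [htLit_dneg]
                      exact rstar_Bq_sat hrsb l' hl'
                  · rw [Finset.mem_singleton] at hl
                    subst hl
                    exact hb2
                · exact hDht l hl)
              rw [Finset.mem_inter] at hc
              rcases Finset.mem_union.1 hc.1 with hcc | hcc
              · exact hHb' c hcc hc.2
              · exact hHa c (mem_Hq.1 hcc).1 hc.2
          · -- rs ∈ p4 : use rule2a
            have hmem : rule2a q rb ra rs ∈ gen2a P q :=
              ⟨rb, hp0, ra, hpa3, rs, Or.inr hp4s, rfl⟩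
            obtain ⟨c, hc⟩ := hht _ (mem_fSPpre_2a hmem) (by
              intro l hl
              rcases Finset.mem_union.1 hl with hl | hl
              · rcases Finset.mem_union.1 hl with hl | hl
                · rcases Finset.mem_union.1 hl with hl | hl
                  · exact hBq0' l hl
                  · exact hBqa l hl
                · obtain ⟨a, ha, rfl⟩ := Finset.mem_image.1 hl
                  exact hrsH a (mem_Hq.1 ha).1
              · obtain ⟨l', hl', rfl⟩ := Finset.mem_image.1 hl
                rw [htLit_dneg]
                exact rstar_Bq_sat hrsb l' hl')
            rw [Finset.mem_inter] at hc
            rcases Finset.mem_union.1 hc.1 with hcc | hcc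
            · exact hHb' c hcc hc.2
            · exact hHa c (mem_Hq.1 hcc).1 hc.2
        · exact liftP2 hP hY hX hq hrs hrsq hrsb hrsH hp2 hb' hHb' hht
      · -- ra ∈ p2
        exact liftP2 hP hY hX hq hrs hrsq hrsb hrsH ⟨hra, hnnqa, hqha⟩ hbodya hHa hht
    case neg =>
      -- ra ∈ p4 (q must be in the head)
      have hqha : q ∈ ra.head := by
        rcases Finset.mem_union.1 hpRa with hs | hs
        · exact hs
        · obtain ⟨l, hl, hatom⟩ := Finset.mem_image.1 hs
          rcases atom_eq_cases hatom with rfl | rfl | rfl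
          · exact absurd hl hposa
          · exact absurd hl hnega
          · exact absurd hl hnnqa
      have hpa4 : ra ∈ p4 (NF P) q := ⟨hra, hnnqa, hqha⟩
      rcases classifyB hq hrb hbodyb hHb with ⟨hpRb, hb'⟩ | ⟨hp0, hBq0⟩ | ⟨hp2, hb'⟩
      · exact liftpR hpRb hb' hHb' hht
      · -- rb ∈ p0 : use rule1a
        have hBq0' : ∀ l ∈ Bq q rb, htLit X (Y \ {q}) l := fun l hl =>
          (htLit_transfer (mem_Bq.1 hl).2).2 (hBq0 l hl)
        have hmem : rule1a q rb ra ∈ gen1a P q := ⟨rb, hp0, ra, hpa4, rfl⟩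
        obtain ⟨c, hc⟩ := hht _ (mem_fSPpre_1a hmem) (by
          intro l hl
          rcases Finset.mem_union.1 hl with hl | hl
          · exact hBq0' l hl
          · exact (htLit_transfer (r4_body_qfree hpa4 l hl)).2 (hbodya l hl))
        rw [Finset.mem_inter] at hc
        rcases Finset.mem_union.1 hc.1 with hcc | hcc
        · exact hHb' c hcc hc.2
        · exact hHa c (mem_Hq.1 hcc).1 hc.2
      · exact liftP2 hP hY hX hq hrs hrsq hrsb hrsH hp2 hb' hHb' hht
  · -- q ∉ Y : the candidate X itself works
    refine ⟨X, hXq, hXY', ?_⟩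
    by_contra hfail
    rw [reduct_sat_iff] at hfail
    push_neg at hfail
    obtain ⟨ra, hra, hbodya, hheada⟩ := hfail
    have hHa : ∀ a ∈ ra.head, a ∉ X := fun a ha hax =>
      Finset.nonempty_iff_ne_empty.1 ⟨a, Finset.mem_inter.2 ⟨ha, hax⟩⟩ hheada
    by_cases hposa : Lit.pos q ∈ ra.body
    · exact hqX (hbodya _ hposa)
    by_cases hnnqa : Lit.nneg q ∈ ra.body
    · exact hq (hbodya _ hnnqa)
    by_cases hpRa : q ∉ sigmaR ra
    · exact liftpR ⟨hra, hpRa⟩ hbodya hHa hht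
    rw [not_not] at hpRa
    -- ra ∈ p1 ∪ p4
    have hr14 : ra ∈ p1 (NF P) q ∪ p4 (NF P) q := by
      by_cases hnega : Lit.neg q ∈ ra.body
      · exact Or.inl ⟨hra, hnega⟩
      · have hqha : q ∈ ra.head := by
          rcases Finset.mem_union.1 hpRa with hs | hs
          · exact hs
          · obtain ⟨l, hl, hatom⟩ := Finset.mem_image.1 hs
            rcases atom_eq_cases hatom with rfl | rfl | rfl
            · exact absurd hl hposa
            · exact absurd hl hnega
            · exact absurd hl hnnqa
        exact Or.inr ⟨hra, hnnqa, hqha⟩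
    have hBqa : ∀ l ∈ Bq q ra, htLit X (Y \ {q}) l := fun l hl =>
      (htLit_transfer (mem_Bq.1 hl).2).2 (hbodya l (mem_Bq.1 hl).1)
    have hBqsat : ∀ l ∈ Bq q ra, satLit (Y \ {q}) l := fun l hl =>
      (satLit_transfer (mem_Bq.1 hl).2).2 (htLit_to_sat hXY' (hbodya l (mem_Bq.1 hl).1))
    -- witness head atom of ra in Y \ {q}
    have hfull : ∀ l ∈ ra.body, satLit Y l := fun l hl => htLit_to_sat hXY' (hbodya l hl)
    obtain ⟨b, hb⟩ := hY ra hra hfull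
    rw [Finset.mem_inter] at hb
    have hbq : b ≠ q := fun h => hq (h ▸ hb.2)
    have hbY' : b ∈ Y \ {q} := mem_Yq.2 ⟨hb.2, hbq⟩
    by_cases hbad : ∃ t, t ∈ p3 (NF P) q ∧ (∀ l ∈ Bq q t, satLit (Y \ {q}) l) ∧
        ∀ a ∈ Hq q t, a ∉ Y \ {q}
    · -- a bad R3 rule exists : use rule6
      obtain ⟨t, hpt, htB, htH⟩ := hbad
      have hsub : (p1 (NF P) q ∪ p4 (NF P) q : Set (Rule α)) ⊆ NF P := by
        rintro u (hu | hu)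
        exacts [hu.1, hu.1]
      have hfin : ((p1 (NF P) q ∪ p4 (NF P) q) \ {ra} : Set (Rule α)).Finite :=
        (hNFfin.subset hsub).subset Set.diff_subset
      obtain ⟨D, hD, hsatD⟩ := dual_build hfin fun u hu => sel14 hY hq u hu.1
      have hDht : ∀ d ∈ D, htLit X (Y \ {q}) d := fun d hd =>
        (satLit_htLit_nopos (dual_mem_shape hD hd)).2 (hsatD d hd)
      have hmem : rule6 q ra t b D ∈ gen6 P q := ⟨ra, hr14, t, hpt, b, hb.1, D, hD, rfl⟩
      obtain ⟨c, hc⟩ := hht _ (mem_fSPpre_6 hmem) (by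
        intro l hl
        rcases Finset.mem_union.1 hl with hl | hl
        · rcases Finset.mem_union.1 hl with hl | hl
          · rcases Finset.mem_union.1 hl with hl | hl
            · rcases Finset.mem_union.1 hl with hl | hl
              · exact hBqa l hl
              · obtain ⟨a, ha, rfl⟩ := Finset.mem_image.1 hl
                exact htH a ha
            · obtain ⟨l', hl', rfl⟩ := Finset.mem_image.1 hl
              rw [htLit_dneg]
              exact htB l' hl'
          · rw [Finset.mem_singleton] at hl
            subst hl
            exact hbY'
        · exact hDht l hl)
      rw [Finset.mem_inter] at hc
      exact hHa c (mem_Hq.1 hc.1).1 hc.2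
    · -- no bad R3 rule : use rule4
      push_neg at hbad
      have hsel : ∀ u ∈ (p3 (NF P) q ∪ p4 (NF P) q : Set (Rule α)), Sel (Y \ {q}) q u := by
        rintro u (hu | hu)
        · by_cases hex : ∃ l ∈ Bq q u, ¬ satLit (Y \ {q}) l
          · exact Or.inl hex
          · push_neg at hex
            obtain ⟨a, ha1, ha2⟩ := hbad u hu hex
            exact Or.inr ⟨a, ha1, ha2⟩
        · exact sel4 hY hq u hu
      have hsub : (p3 (NF P) q ∪ p4 (NF P) q : Set (Rule α)) ⊆ NF P := by
        rintro u (hu | hu)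
        exacts [hu.1, hu.1]
      obtain ⟨D, hD, hsatD⟩ := dual_build (hNFfin.subset hsub) hsel
      have hDht : ∀ d ∈ D, htLit X (Y \ {q}) d := fun d hd =>
        (satLit_htLit_nopos (dual_mem_shape hD hd)).2 (hsatD d hd)
      have hdisj : D ∩ notL (Bq q ra) = ∅ := dual_disj_notL hsatD hBqsat
      have hmem : rule4 q ra D ∈ gen4 P q := ⟨ra, hr14, D, hD, hdisj, rfl⟩
      obtain ⟨c, hc⟩ := hht _ (mem_fSPpre_4 hmem) (by
        intro l hl
        rcases Finset.mem_union.1 hl with hl | hl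
        · exact hBqa l hl
        · exact hDht l hl)
      rw [Finset.mem_inter] at hc
      exact hHa c (mem_Hq.1 hc.1).1 hc.2

end Lifting
/-! ### q-free program transfers and the main theorem -/

section MainGlue
variable {α : Type*} [DecidableEq α]
set_option linter.unusedSectionVars false
variable {q : α} {Y : Finset α} {R : Set (Rule α)}

lemma qfree_atoms {r : Rule α} (h : q ∉ sigmaR r) :
    (∀ a ∈ r.head, a ≠ q) ∧ ∀ l ∈ r.body, l.atom ≠ q := by
  constructor
  · rintro a ha rfl
    exact h (Finset.mem_union_left _ ha)
  · intro l hl hatom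
    exact h (Finset.mem_union_right _ (hatom ▸ Finset.mem_image_of_mem _ hl))

lemma qfree_clSat_down (hqf : ∀ r ∈ R, q ∉ sigmaR r) (h : clSat Y R) :
    clSat (Y \ {q}) R := by
  intro r hr hb
  obtain ⟨hqh, hqb⟩ := qfree_atoms (hqf r hr)
  obtain ⟨b, hb'⟩ := h r hr fun l hl => (satLit_transfer (hqb l hl)).1 (hb l hl)
  rw [Finset.mem_inter] at hb'
  exact ⟨b, Finset.mem_inter.2 ⟨hb'.1, mem_Yq.2 ⟨hb'.2, hqh b hb'.1⟩⟩⟩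

lemma qfree_htSat_down (hqf : ∀ r ∈ R, q ∉ sigmaR r) (h : htSat R Y Y) :
    htSat R (Y \ {q}) Y := by
  rw [htSat_iff] at h ⊢
  refine ⟨h.1, ?_⟩
  intro r hr hb
  obtain ⟨hqh, hqb⟩ := qfree_atoms (hqf r hr)
  have : (r.head ∩ Y).Nonempty := by
    apply h.2 r hr
    intro l hl
    have := hb l hl
    cases l with
    | pos a => exact Finset.sdiff_subset this
    | neg a => exact this
    | nneg a => exact this
  obtain ⟨b, hb'⟩ := this
  rw [Finset.mem_inter] at hb'
  exact ⟨b, Finset.mem_inter.2 ⟨hb'.1, mem_Yq.2 ⟨hb'.2, hqh b hb'.1⟩⟩⟩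

lemma qfree_reduct_lift (hqf : ∀ r ∈ R, q ∉ sigmaR r) {X Xh : Finset α}
    (hXh : Xh \ {q} = X)
    (h2 : clSat X (reduct R (Y \ {q}))) : clSat Xh (reduct R Y) := by
  rw [reduct_sat_iff] at h2 ⊢
  intro r hr hb
  obtain ⟨hqh, hqb⟩ := qfree_atoms (hqf r hr)
  have : (r.head ∩ X).Nonempty := by
    apply h2 r hr
    intro l hl
    have hlq := hqb l hl
    have := hb l hl
    cases l with
    | pos a =>
      rw [← hXh]
      exact mem_Yq.2 ⟨this, by simpa [Lit.atom] using hlq⟩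
    | neg a =>
      intro ha
      exact this (Finset.sdiff_subset ha)
    | nneg a =>
      exact mem_Yq.2 ⟨this, by simpa [Lit.atom] using hlq⟩
  obtain ⟨b, hb'⟩ := this
  rw [Finset.mem_inter] at hb'
  refine ⟨b, Finset.mem_inter.2 ⟨hb'.1, ?_⟩⟩
  rw [← hXh] at hb'
  exact Finset.sdiff_subset hb'.2

end MainGlue
/-- every answer set of `P ∪ R` (with `q` removed) is an answer set
    of `f_SP(P,q) ∪ R`. -/
theorem statement_5 (Sg : Finset α) (P : Set (Rule α)) (hP : P.Finite)
    (hPS : sigmaSet P ⊆ (↑Sg : Set α)) (q : α) (hq : q ∈ Sg) :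
    ∀ R : Set (Rule α), R.Finite → sigmaSet R ⊆ (↑Sg : Set α) \ {q} →
      (fun Y => Y \ ({q} : Finset α)) '' AS (P ∪ R) ⊆ AS (fSP P q ∪ R) := by
  intro R hRfin hRS
  rintro x ⟨Y, hYAS, rfl⟩
  obtain ⟨⟨hYsub, hYSig, hYht⟩, hYmin⟩ := hYAS
  -- q does not occur in R
  have hRqf : ∀ r ∈ R, q ∉ sigmaR r := by
    intro r hr hqr
    have : (q : α) ∈ sigmaSet R := by
      rw [sigmaSet]
      exact Set.mem_biUnion hr hqr
    exact (hRS this).2 rfl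
  obtain ⟨hYhtP, hYhtR⟩ := htSat_union.1 hYht
  have hYNFht : htSat (NF P) Y Y := (htSat_NF subset_rfl).2 hYhtP
  have hYNF : clSat Y (NF P) := hYNFht.1
  have hY'subY : Y \ {q} ⊆ Y := Finset.sdiff_subset
  -- minimality hypothesis for soundness/lifting
  have hminP : q ∈ Y → ¬ clSat (Y \ {q}) (reduct (NF P) Y) := by
    intro hqY hcl
    have hss : Y \ {q} ⊂ Y :=
      Finset.sdiff_ssubset (Finset.singleton_subset_iff.2 hqY) (Finset.singleton_nonempty q)
    have hPht : htSat P (Y \ {q}) Y := (htSat_NF hY'subY).1 ⟨hYNF, hcl⟩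
    have hRht : htSat R (Y \ {q}) Y := qfree_htSat_down hRqf hYhtR
    exact hYmin _ hss ⟨hY'subY, hYSig, htSat_union.2 ⟨hPht, hRht⟩⟩
  -- soundness : Y\{q} satisfies fSPpre classically
  have hFY' : clSat (Y \ {q}) (fSPpre P q) := soundness hYNF hminP
  have hFht : htSat (fSP P q) (Y \ {q}) (Y \ {q}) :=
    (htSat_NF subset_rfl).2 (htSat_self.2 hFY')
  have hRY'cl : clSat (Y \ {q}) R := qfree_clSat_down hRqf hYhtR.1
  have hFRht : htSat (fSP P q ∪ R) (Y \ {q}) (Y \ {q}) :=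
    htSat_union.2 ⟨hFht, htSat_self.2 hRY'cl⟩
  -- the key claim : no smaller HT model of fSP ∪ R below Y\{q}
  have claimC : ∀ X : Finset α, X ⊂ Y \ {q} → ¬ htSat (fSP P q ∪ R) X (Y \ {q}) := by
    intro X hss hsat
    obtain ⟨hsatF, hsatR⟩ := htSat_union.1 hsat
    have hXsub : X ⊆ Y \ {q} := hss.subset
    have hpre : htSat (fSPpre P q) X (Y \ {q}) := (htSat_NF hXsub).1 hsatF
    have hht := (htSat_iff.1 hpre).2
    obtain ⟨Xh, hXh1, hXh2, hXh3⟩ := lifting hP hYNF hminP hXsub hht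
    have hPht : htSat P Xh Y := (htSat_NF hXh2).1 ⟨hYNF, hXh3⟩
    have hRht : htSat R Xh Y :=
      ⟨hYhtR.1, qfree_reduct_lift hRqf hXh1 hsatR.2⟩
    have hXhss : Xh ⊂ Y := by
      rw [Finset.ssubset_iff_subset_ne]
      refine ⟨hXh2, ?_⟩
      rintro rfl
      exact hss.ne hXh1.symm
    exact hYmin Xh hXhss ⟨hXh2, hYSig, htSat_union.2 ⟨hPht, hRht⟩⟩
  -- signature condition
  have hSig : (↑(Y \ {q}) : Set α) ⊆ sigmaSet (fSP P q ∪ R) := by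
    intro a haY'
    rw [Finset.mem_coe] at haY'
    by_contra hnot
    have hnos : ∀ r ∈ fSP P q ∪ R, a ∉ sigmaR r := by
      intro r hr har
      exact hnot (by rw [sigmaSet]; exact Set.mem_biUnion hr har)
    have hss : (Y \ {q}).erase a ⊂ Y \ {q} := Finset.erase_ssubset haY'
    apply claimC _ hss
    refine ⟨hFRht.1, ?_⟩
    rw [reduct_sat_iff]
    intro r hr hb
    have hY'r : (r.head ∩ (Y \ {q})).Nonempty := by
      apply (reduct_sat_iff.1 hFRht.2) r hr
      intro l hl
      have := hb l hl
      cases l with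
      | pos b => exact Finset.erase_subset _ _ this
      | neg b => exact this
      | nneg b => exact this
    obtain ⟨b, hb'⟩ := hY'r
    rw [Finset.mem_inter] at hb'
    refine ⟨b, Finset.mem_inter.2 ⟨hb'.1, Finset.mem_erase.2 ⟨?_, hb'.2⟩⟩⟩
    rintro rfl
    exact hnos r hr (Finset.mem_union_left _ hb'.1)
  exact ⟨⟨subset_rfl, hSig, hFRht⟩, fun X hss hmem => claimC X hss hmem.2.2⟩

end ASPForget
end

section
/- Let P be an extended logic program over Σ and q ∈ Σ, and let Σ' = Σ(P)∖{q}. Then dist(P, f_Sem(P,q)) ≥ (|f_Sem(P,q)| − |P|) · |Σ'|, where |f_Sem(P,q)| and |P| denote numbers of rules. -/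
/- Core development: extended logic programs, HT-semantics, normal form,
   the syntactic forgetting operator f_SP, the semantic operator f_Sem,
   criterion Ω, q-forgettability, and distances between programs. -/

namespace ASPForget

variable {α : Type*} [DecidableEq α]

lemma size_lower {P : Set (Rule α)} {q : α} {Sg' : Finset α} {s : Rule α}
    (hs : s ∈ fSem P q Sg') : Sg'.card ≤ ruleSize s := by
  have key : ∀ (g : α → Lit α), (∀ a, (g a).atom = a) → (∀ a ∈ Sg', g a ∈ s.body) →
      Sg'.card ≤ ruleSize s := by
    intro g hatom hmem
    have h1 : Sg'.card ≤ s.body.card := by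
      apply Finset.card_le_card_of_injOn g hmem
      intro a _ b _ hab
      have := congrArg Lit.atom hab
      rwa [hatom, hatom] at this
    exact le_trans h1 (Nat.le_add_left _ _)
  rcases hs with ⟨X, Y, hXY, hYS, -, -, rfl⟩ | ⟨Y, hYS, -, rfl⟩
  · refine key (fun a => if a ∈ X then .pos a else if a ∈ Y then .nneg a else .neg a)
      (fun a => by by_cases h1 : a ∈ X <;> by_cases h2 : a ∈ Y <;> simp [h1, h2, Lit.atom]) ?_
    intro a haS
    simp only [ruleXY, Finset.mem_union, Finset.mem_image]
    by_cases h1 : a ∈ X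
    · exact Or.inl (Or.inl ⟨a, h1, by simp [h1]⟩)
    · by_cases h2 : a ∈ Y
      · exact Or.inr ⟨a, Finset.mem_sdiff.2 ⟨h2, h1⟩, by simp [h1, h2]⟩
      · exact Or.inl (Or.inr ⟨a, Finset.mem_sdiff.2 ⟨haS, h2⟩, by simp [h1, h2]⟩)
  · refine key (fun a => if a ∈ Y then .pos a else .neg a)
      (fun a => by by_cases h1 : a ∈ Y <;> simp [h1, Lit.atom]) ?_
    intro a haS
    simp only [ruleYY, Finset.mem_union, Finset.mem_image]
    by_cases h1 : a ∈ Y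
    · exact Or.inl ⟨a, h1, by simp [h1]⟩
    · exact Or.inr ⟨a, Finset.mem_sdiff.2 ⟨haS, h1⟩, by simp [h1]⟩

/-- lower bound on the distance between `P` and `f_Sem(P,q)`:
    `dist(P, f_Sem(P,q)) ≥ (|f_Sem(P,q)| − |P|) · |Σ'|`. -/
theorem statement_11 (P : Set (Rule α)) (hP : P.Finite) (q : α) (Sg' : Finset α)
    (hS : (↑Sg' : Set α) = sigmaSet P \ {q}) :
    ((fSem P q Sg').ncard - P.ncard) * Sg'.card ≤ progDist P (fSem P q Sg') := by
  set Q := fSem P q Sg' with hQ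
  by_cases hfin : Q.Finite
  · apply le_csInf
    · exact ⟨distM P Q ∅ id, ∅, id, by simp [Set.InjOn]⟩
    rintro n ⟨dom, f, hdom, hinj, himg, rfl⟩
    have hdomfin : dom.Finite := hP.subset hdom
    have hdfin : (Q \ f '' dom).Finite := hfin.diff
    -- lower bound on third summand
    have hsum : (Q \ f '' dom).ncard * Sg'.card ≤ ∑ᶠ r ∈ Q \ f '' dom, ruleSize r := by
      rw [finsum_mem_eq_finite_toFinset_sum _ hdfin]
      calc (Q \ f '' dom).ncard * Sg'.card
          = hdfin.toFinset.card * Sg'.card := by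
            rw [Set.ncard_eq_toFinset_card _ hdfin]
        _ ≤ ∑ r ∈ hdfin.toFinset, ruleSize r := by
            have := Finset.card_nsmul_le_sum hdfin.toFinset ruleSize Sg'.card
              (fun r hr => size_lower (Set.mem_of_mem_diff (hdfin.mem_toFinset.1 hr)))
            simpa [smul_eq_mul] using this
    have hcount : Q.ncard - P.ncard ≤ (Q \ f '' dom).ncard := by
      have h1 : Q.ncard ≤ (Q \ f '' dom).ncard + (f '' dom).ncard := by
        rw [← Set.ncard_union_eq (Set.disjoint_sdiff_left) hdfin (hdomfin.image f)]
        apply Set.ncard_le_ncard _ (hdfin.union (hdomfin.image f))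
        intro x hx
        by_cases hx2 : x ∈ f '' dom
        · exact Or.inr hx2
        · exact Or.inl ⟨hx, hx2⟩
      have h2 : (f '' dom).ncard ≤ P.ncard :=
        le_trans (Set.ncard_image_le hdomfin) (Set.ncard_le_ncard hdom hP)
      omega
    calc (Q.ncard - P.ncard) * Sg'.card
        ≤ (Q \ f '' dom).ncard * Sg'.card := Nat.mul_le_mul_right _ hcount
      _ ≤ ∑ᶠ r ∈ Q \ f '' dom, ruleSize r := hsum
      _ ≤ distM P Q dom f := Nat.le_add_left _ _
  · rw [Set.Infinite.ncard hfin]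
    simp

end ASPForget
end
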